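/- arXiv:1805.12333 — 7 statements merged into one kernel-verified Lean document; each statement's English description precedes it below -/
import Mathlib

section
/- Let P_X be a probability distribution on a nonempty finite set 𝒳 with P_X(x) > 0 for all x, and let E0 > 0, R_s ≥ 0, R_w ≥ 0 be real numbers. Define the false-accept exponent E_FA(R_w, R_s) = min over all probability distributions Q_X on 𝒳 of [ D(Q_X‖P_X) + min{ R_s, [H_Q(X) − R_w]_+ } ], and define R_w*(E0) = min over all probability distributions Q_X on 𝒳 with D(Q_X‖P_X) ≤ E0 of [ Σ_x Q_X(x) ln(1/P_X(x)) ] − E0. Then E_FA(R_w, R_s) ≥ E0 if and only if R_s ≥ E0 and R_w ≤ R_w*(E0). -/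
open Finset

/-- A probability distribution on a finite set: nonnegative and summing to 1. -/
def IsProb {α : Type*} [Fintype α] (Q : α → ℝ) : Prop :=
  (∀ a, 0 ≤ Q a) ∧ ∑ a, Q a = 1

/-- Kullback–Leibler divergence `D(Q‖P) = Σ_a Q(a) ln(Q(a)/P(a))`
(with the convention `0 · ln(0/p) = 0`, automatic since `Real.log 0 = 0`
and the term is multiplied by `Q a = 0`). -/
noncomputable def KL {α : Type*} [Fintype α] (Q P : α → ℝ) : ℝ :=
  ∑ a, Q a * Real.log (Q a / P a)

/-- Shannon entropy `H_Q(X) = -Σ_x Q(x) ln Q(x)` (with `0 ln 0 = 0`). -/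
noncomputable def entropy {α : Type*} [Fintype α] (Q : α → ℝ) : ℝ :=
  -∑ a, Q a * Real.log (Q a)

/-- The 𝒳-marginal of a joint distribution on `𝒳 × 𝒴`. -/
noncomputable def margX {𝒳 𝒴 : Type*} [Fintype 𝒴] (Q : 𝒳 × 𝒴 → ℝ) : 𝒳 → ℝ :=
  fun x => ∑ y, Q (x, y)

/-- The 𝒴-marginal of a joint distribution on `𝒳 × 𝒴`. -/
noncomputable def margY {𝒳 𝒴 : Type*} [Fintype 𝒳] (Q : 𝒳 × 𝒴 → ℝ) : 𝒴 → ℝ :=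
  fun y => ∑ x, Q (x, y)

/-- Conditional entropy `H_Q(X|Y) = -Σ_{x,y} Q(x,y) ln(Q(x,y)/Q_Y(y))` (with `0 ln 0 = 0`). -/
noncomputable def condEnt {𝒳 𝒴 : Type*} [Fintype 𝒳] [Fintype 𝒴] (Q : 𝒳 × 𝒴 → ℝ) : ℝ :=
  -∑ x, ∑ y, Q (x, y) * Real.log (Q (x, y) / margY Q y)

section Aux
variable {α : Type*} [Fintype α]

lemma term_split (Q P : α → ℝ) (hQ : ∀ a, 0 ≤ Q a) (hP : ∀ a, 0 < P a) (a : α) :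
    Q a * Real.log (Q a / P a) = Q a * Real.log (Q a) + Q a * Real.log (1 / P a) := by
  rcases eq_or_lt_of_le (hQ a) with h | h
  · simp [← h]
  · rw [Real.log_div h.ne' (hP a).ne', Real.log_div one_ne_zero (hP a).ne', Real.log_one]
    ring

lemma kl_decomp (Q P : α → ℝ) (hQ : ∀ a, 0 ≤ Q a) (hP : ∀ a, 0 < P a) :
    (∑ a, Q a * Real.log (Q a / P a)) =
      (∑ a, Q a * Real.log (Q a)) + ∑ a, Q a * Real.log (1 / P a) := by
  rw [← Finset.sum_add_distrib]
  exact Finset.sum_congr rfl fun a _ => term_split Q P hQ hP a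

lemma kl_nonneg (Q P : α → ℝ) (hQ : (∀ a, 0 ≤ Q a) ∧ ∑ a, Q a = 1)
    (hPs : ∑ a, P a = 1) (hP : ∀ a, 0 < P a) :
    0 ≤ ∑ a, Q a * Real.log (Q a / P a) := by
  have key : ∀ a : α, Q a - P a ≤ Q a * Real.log (Q a / P a) := by
    intro a
    rcases eq_or_lt_of_le (hQ.1 a) with h | h
    · simp [← h]; exact (hP a).le
    · have h1 : Real.log (P a / Q a) ≤ P a / Q a - 1 :=
        Real.log_le_sub_one_of_pos (div_pos (hP a) h)
      have h2 : Real.log (P a / Q a) = - Real.log (Q a / P a) := by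
        rw [← Real.log_inv]; congr 1; field_simp
      nlinarith [mul_le_mul_of_nonneg_left h1 h.le,
        (div_mul_cancel₀ (P a) h.ne' : P a / Q a * Q a = P a)]
  calc (0:ℝ) = ∑ a, (Q a - P a) := by rw [Finset.sum_sub_distrib, hQ.2, hPs]; ring
  _ ≤ _ := Finset.sum_le_sum fun a _ => key a

lemma kl_mix_le (Q P : α → ℝ) (hQ : ∀ a, 0 ≤ Q a) (hP : ∀ a, 0 < P a)
    (t : ℝ) (ht0 : 0 ≤ t) (ht1 : t ≤ 1) :
    ∑ a, ((1-t)*Q a + t*P a) * Real.log (((1-t)*Q a + t*P a) / P a)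
      ≤ (1-t) * ∑ a, Q a * Real.log (Q a / P a) := by
  rw [Finset.mul_sum]
  refine Finset.sum_le_sum fun a _ => ?_
  have hQt : ∀ b, 0 ≤ (1-t)*Q b + t*P b := fun b =>
    add_nonneg (mul_nonneg (by linarith) (hQ b)) (mul_nonneg ht0 (hP b).le)
  have hconv := Real.convexOn_mul_log.2 (Set.mem_Ici.2 (hQ a)) (Set.mem_Ici.2 (hP a).le)
    (by linarith : (0:ℝ) ≤ 1-t) ht0 (by ring)
  simp only [smul_eq_mul] at hconv
  have e1 := term_split (fun b => (1-t)*Q b + t*P b) P hQt hP a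
  have e3 : Real.log (1 / P a) = - Real.log (P a) := by rw [one_div, Real.log_inv]
  have e2 : Q a * Real.log (Q a / P a) = Q a * Real.log (Q a) - Q a * Real.log (P a) := by
    rw [term_split Q P hQ hP a, e3]; ring
  rw [e1, e3, e2]
  nlinarith [hconv]

end Aux

/-- `E_FA(R_w, R_s) ≥ E0` iff `R_s ≥ E0` and `R_w ≤ R_w*(E0)`. -/
theorem stmt_0 {𝒳 : Type*} [Fintype 𝒳] [Nonempty 𝒳]
    (P : 𝒳 → ℝ) (hP : IsProb P) (hPpos : ∀ x, 0 < P x)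
    (E0 Rs Rw : ℝ) (hE0 : 0 < E0) (hRs : 0 ≤ Rs) (hRw : 0 ≤ Rw) :
    E0 ≤ sInf {v | ∃ Q : 𝒳 → ℝ, IsProb Q ∧
        v = KL Q P + min Rs (max (entropy Q - Rw) 0)} ↔
      (E0 ≤ Rs ∧
        Rw ≤ sInf {v | ∃ Q : 𝒳 → ℝ, IsProb Q ∧ KL Q P ≤ E0 ∧
          v = (∑ x, Q x * Real.log (1 / P x)) - E0}) := by
  set L : (𝒳 → ℝ) → ℝ := fun Q => ∑ x, Q x * Real.log (1 / P x) with hL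
  have hKLPP : KL P P = 0 := by
    unfold KL
    apply Finset.sum_eq_zero
    intro a _
    rw [div_self (hPpos a).ne', Real.log_one, mul_zero]
  have hEnt : ∀ Q : 𝒳 → ℝ, (∀ a, 0 ≤ Q a) → entropy Q = L Q - KL Q P := by
    intro Q hQ
    have hd := kl_decomp Q P hQ hPpos
    simp only [entropy, KL, hL]
    linarith
  have hPle1 : ∀ x, P x ≤ 1 := by
    intro x
    calc P x ≤ ∑ a, P a := Finset.single_le_sum (fun i _ => (hPpos i).le) (Finset.mem_univ x)
    _ = 1 := hP.2
  have hLnn : ∀ Q : 𝒳 → ℝ, (∀ a, 0 ≤ Q a) → 0 ≤ L Q := by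
    intro Q hQ
    apply Finset.sum_nonneg
    intro x _
    exact mul_nonneg (hQ x) (Real.log_nonneg (one_le_one_div (hPpos x) (hPle1 x)))
  have hSbdd : BddBelow {v | ∃ Q : 𝒳 → ℝ, IsProb Q ∧
      v = KL Q P + min Rs (max (entropy Q - Rw) 0)} := by
    refine ⟨0, ?_⟩
    rintro v ⟨Q, hQp, rfl⟩
    have h1 : 0 ≤ KL Q P := kl_nonneg Q P hQp hP.2 hPpos
    have h2 : 0 ≤ min Rs (max (entropy Q - Rw) 0) := le_min hRs (le_max_right _ _)
    linarith
  have hTbdd : BddBelow {v | ∃ Q : 𝒳 → ℝ, IsProb Q ∧ KL Q P ≤ E0 ∧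
      v = (∑ x, Q x * Real.log (1 / P x)) - E0} := by
    refine ⟨-E0, ?_⟩
    rintro v ⟨Q, hQp, _, rfl⟩
    have := hLnn Q hQp.1
    simp only [hL] at this
    linarith
  constructor
  · intro h
    have hPmem : KL P P + min Rs (max (entropy P - Rw) 0) ∈ {v | ∃ Q : 𝒳 → ℝ, IsProb Q ∧
        v = KL Q P + min Rs (max (entropy Q - Rw) 0)} := ⟨P, hP, rfl⟩
    have h1 : E0 ≤ Rs := by
      have h2 := h.trans (csInf_le hSbdd hPmem)
      rw [hKLPP, zero_add] at h2
      exact h2.trans (min_le_left _ _)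
    refine ⟨h1, le_csInf ⟨_, P, hP, by rw [hKLPP]; exact hE0.le, rfl⟩ ?_⟩
    rintro v ⟨Q, hQp, hKQ, rfl⟩
    by_contra hc
    push_neg at hc
    have hcB : L Q < E0 + Rw := by simp only [hL]; linarith
    set c := L Q with hc'
    set d := L P with hd'
    set t := min 1 ((E0 + Rw - c) / (|d - c| + 1)) with ht'
    have habs : (0:ℝ) ≤ |d - c| := abs_nonneg _
    have ht0 : 0 < t := lt_min one_pos (div_pos (by linarith) (by linarith))
    have ht1 : t ≤ 1 := min_le_left _ _
    have hLt : (1-t)*c + t*d < E0 + Rw := by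
      have h2 : t ≤ (E0+Rw-c)/(|d-c|+1) := min_le_right _ _
      have h3 : t * |d - c| < E0 + Rw - c := by
        calc t * |d-c| ≤ (E0+Rw-c)/(|d-c|+1) * |d-c| :=
              mul_le_mul_of_nonneg_right h2 habs
        _ < E0+Rw-c := by
              rw [div_mul_eq_mul_div, div_lt_iff₀ (by linarith)]
              nlinarith
      have h4 : t * (d - c) ≤ t * |d - c| := mul_le_mul_of_nonneg_left (le_abs_self _) ht0.le
      nlinarith
    set Qt : 𝒳 → ℝ := fun a => (1-t)*Q a + t*P a with hQt'
    have hQtprob : IsProb Qt := by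
      constructor
      · intro a
        exact add_nonneg (mul_nonneg (by linarith) (hQp.1 a)) (mul_nonneg ht0.le (hPpos a).le)
      · simp only [hQt', Finset.sum_add_distrib, ← Finset.mul_sum, hQp.2, hP.2]
        ring
    have hKLt : KL Qt P ≤ (1-t) * KL Q P := kl_mix_le Q P hQp.1 hPpos t ht0.le ht1
    have hLQt : L Qt = (1-t)*c + t*d := by
      simp only [hL, hQt', hc', hd', add_mul, Finset.sum_add_distrib, Finset.mul_sum]
      congr 1 <;> · apply Finset.sum_congr rfl; intro x _; ring
    have hmem : KL Qt P + min Rs (max (entropy Qt - Rw) 0) ∈ {v | ∃ Q : 𝒳 → ℝ, IsProb Q ∧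
        v = KL Q P + min Rs (max (entropy Q - Rw) 0)} := ⟨Qt, hQtprob, rfl⟩
    have hge := h.trans (csInf_le hSbdd hmem)
    have hKt : KL Qt P < E0 := by
      have : (1-t) * KL Q P ≤ (1-t) * E0 := mul_le_mul_of_nonneg_left hKQ (by linarith)
      nlinarith
    have hEQt : entropy Qt = L Qt - KL Qt P := hEnt Qt hQtprob.1
    rcases le_total (entropy Qt - Rw) 0 with hcase | hcase
    · rw [max_eq_right hcase] at hge
      linarith [min_le_right Rs (0:ℝ)]
    · rw [max_eq_left hcase] at hge
      rw [hLQt] at hEQt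
      linarith [min_le_right Rs (entropy Qt - Rw)]
  · rintro ⟨h1, h2⟩
    refine le_csInf ⟨KL P P + min Rs (max (entropy P - Rw) 0), ⟨P, hP, rfl⟩⟩ ?_
    rintro v ⟨Q, hQp, rfl⟩
    have hKL0 : 0 ≤ KL Q P := kl_nonneg Q P hQp hP.2 hPpos
    rcases le_or_gt E0 (KL Q P) with hk | hk
    · have : 0 ≤ min Rs (max (entropy Q - Rw) 0) := le_min (hE0.le.trans h1) (le_max_right _ _)
      linarith
    · have hmemT : (∑ x, Q x * Real.log (1 / P x)) - E0 ∈ {v | ∃ Q : 𝒳 → ℝ, IsProb Q ∧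
          KL Q P ≤ E0 ∧ v = (∑ x, Q x * Real.log (1 / P x)) - E0} := ⟨Q, hQp, hk.le, rfl⟩
      have hRwle : Rw ≤ (∑ x, Q x * Real.log (1 / P x)) - E0 := h2.trans (csInf_le hTbdd hmemT)
      have hEQ : entropy Q = L Q - KL Q P := hEnt Q hQp.1
      simp only [hL] at hEQ
      have hmin : E0 - KL Q P ≤ min Rs (max (entropy Q - Rw) 0) :=
        le_min (by linarith) (le_max_of_le_left (by linarith))
      linarith
end

section
/- Let P_X be a probability distribution on a nonempty finite set 𝒳 with P_X(x) > 0 for all x, and let E0 > 0. Then min over all probability distributions Q_X on 𝒳 with D(Q_X‖P_X) ≤ E0 of [ Σ_x Q_X(x) ln(1/P_X(x)) ] − E0 = sup over λ > 0 of { −λ ln( Σ_x P_X(x)^{1+1/λ} ) − (1+λ) E0 }. -/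
open Finset

section Aux

variable {α : Type*} [Fintype α] [Nonempty α]

/-- Gibbs' inequality for an unnormalized reference measure. -/
lemma gibbs_aux (Q R : α → ℝ) (hQ0 : ∀ a, 0 ≤ Q a) (hQ1 : ∑ a, Q a = 1)
    (hR : ∀ a, 0 < R a) :
    -Real.log (∑ a, R a) ≤ ∑ a, Q a * Real.log (Q a / R a) := by
  have hS : 0 < ∑ a, R a := Finset.sum_pos (fun a _ => hR a) univ_nonempty
  set S : ℝ := ∑ a, R a with hSdef
  have key : ∀ a, Q a - R a / S ≤ Q a * Real.log (Q a / R a) + Q a * Real.log S := by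
    intro a
    rcases eq_or_lt_of_le (hQ0 a) with h | h
    · rw [← h]
      simp
      exact div_nonneg (hR a).le hS.le
    · have hSQ : 0 < S * Q a := mul_pos hS h
      have h1 : Q a * Real.log (Q a / R a) + Q a * Real.log S
          = Q a * (- Real.log (R a / (S * Q a))) := by
        rw [Real.log_div (ne_of_gt h) (ne_of_gt (hR a)),
            Real.log_div (ne_of_gt (hR a)) hSQ.ne',
            Real.log_mul (ne_of_gt hS) (ne_of_gt h)]
        ring
      rw [h1]
      have h2 : Real.log (R a / (S * Q a)) ≤ R a / (S * Q a) - 1 :=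
        Real.log_le_sub_one_of_pos (div_pos (hR a) hSQ)
      have h3 : Q a * (1 - R a / (S * Q a)) ≤ Q a * (- Real.log (R a / (S * Q a))) :=
        mul_le_mul_of_nonneg_left (by linarith) h.le
      have h4 : Q a * (1 - R a / (S * Q a)) = Q a - R a / S := by
        field_simp
      linarith
  have hsum : ∑ a, (Q a - R a / S)
      ≤ ∑ a, (Q a * Real.log (Q a / R a) + Q a * Real.log S) :=
    Finset.sum_le_sum (fun a _ => key a)
  have e1 : ∑ a, (Q a - R a / S) = 0 := by
    rw [Finset.sum_sub_distrib, hQ1, ← Finset.sum_div, ← hSdef, div_self hS.ne']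
    ring
  have e2 : ∑ a, (Q a * Real.log (Q a / R a) + Q a * Real.log S)
      = (∑ a, Q a * Real.log (Q a / R a)) + Real.log S := by
    rw [Finset.sum_add_distrib, ← Finset.sum_mul, hQ1, one_mul]
  rw [e1, e2] at hsum
  linarith

/-- Weak Lagrangian duality: the Gallager function lower-bounds the objective
plus `l` times the KL divergence. -/
lemma weak_dual (P Q : α → ℝ) (hP : ∀ x, 0 < P x) (hQ0 : ∀ a, 0 ≤ Q a)
    (hQ1 : ∑ a, Q a = 1) (l : ℝ) (hl : 0 < l) :
    -l * Real.log (∑ x, P x ^ (1 + 1/l)) - l * KL Q P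
      ≤ ∑ x, Q x * Real.log (1 / P x) := by
  have gibbs : -Real.log (∑ x, P x ^ (1 + 1/l))
      ≤ ∑ x, Q x * Real.log (Q x / P x ^ (1 + 1/l)) :=
    gibbs_aux Q (fun x => P x ^ (1 + 1/l)) hQ0 hQ1
      (fun x => Real.rpow_pos_of_pos (hP x) _)
  have hpt : ∀ x, l * (Q x * Real.log (Q x / P x ^ (1 + 1/l)))
      = Q x * Real.log (1 / P x) + l * (Q x * Real.log (Q x / P x)) := by
    intro x
    rcases eq_or_lt_of_le (hQ0 x) with h | h
    · rw [← h]; ring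
    · rw [Real.log_div h.ne' (Real.rpow_pos_of_pos (hP x) _).ne',
        Real.log_div h.ne' (hP x).ne', Real.log_rpow (hP x),
        Real.log_div one_ne_zero (hP x).ne', Real.log_one]
      field_simp
      ring
  have hsum : l * ∑ x, Q x * Real.log (Q x / P x ^ (1 + 1/l))
      = (∑ x, Q x * Real.log (1 / P x)) + l * KL Q P := by
    rw [Finset.mul_sum, KL, Finset.mul_sum, ← Finset.sum_add_distrib]
    exact Finset.sum_congr rfl (fun x _ => hpt x)
  nlinarith [mul_le_mul_of_nonneg_left gibbs hl.le]

/-- The partition function of the tilted family. -/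
noncomputable def Zf (P : α → ℝ) (β : ℝ) : ℝ := ∑ x, P x ^ β

/-- The tilted (escort) distribution `Q_β ∝ P^β`. -/
noncomputable def Qb (P : α → ℝ) (β : ℝ) : α → ℝ := fun x => P x ^ β / Zf P β

lemma Zf_pos (P : α → ℝ) (hP : ∀ x, 0 < P x) (β : ℝ) : 0 < Zf P β :=
  Finset.sum_pos (fun x _ => Real.rpow_pos_of_pos (hP x) β) univ_nonempty

lemma Qb_pos (P : α → ℝ) (hP : ∀ x, 0 < P x) (β : ℝ) (x : α) : 0 < Qb P β x :=
  div_pos (Real.rpow_pos_of_pos (hP x) β) (Zf_pos P hP β)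

lemma Qb_sum (P : α → ℝ) (hP : ∀ x, 0 < P x) (β : ℝ) : ∑ x, Qb P β x = 1 := by
  simp only [Qb]
  rw [← Finset.sum_div, ← Zf, div_self (Zf_pos P hP β).ne']

lemma Qb_log (P : α → ℝ) (hP : ∀ x, 0 < P x) (β : ℝ) (x : α) :
    Real.log (Qb P β x) = β * Real.log (P x) - Real.log (Zf P β) := by
  rw [Qb, Real.log_div (Real.rpow_pos_of_pos (hP x) β).ne' (Zf_pos P hP β).ne',
    Real.log_rpow (hP x)]

/-- Central identity: the tilted distribution achieves the dual value exactly. -/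
lemma key_id (P : α → ℝ) (hP : ∀ x, 0 < P x) (β : ℝ) :
    KL (Qb P β) P + (β - 1) * (∑ x, Qb P β x * Real.log (1 / P x))
      = -Real.log (Zf P β) := by
  have hpt : ∀ x, Qb P β x * Real.log (Qb P β x / P x)
      + (β - 1) * (Qb P β x * Real.log (1 / P x))
      = Qb P β x * (-Real.log (Zf P β)) := by
    intro x
    rw [Real.log_div (Qb_pos P hP β x).ne' (hP x).ne', Qb_log P hP β x,
      Real.log_div one_ne_zero (hP x).ne', Real.log_one]
    ring
  calc KL (Qb P β) P + (β - 1) * (∑ x, Qb P β x * Real.log (1 / P x))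
      = ∑ x, (Qb P β x * Real.log (Qb P β x / P x)
          + (β - 1) * (Qb P β x * Real.log (1 / P x))) := by
        rw [KL, Finset.sum_add_distrib, Finset.mul_sum]
    _ = ∑ x, Qb P β x * (-Real.log (Zf P β)) := Finset.sum_congr rfl (fun x _ => hpt x)
    _ = -Real.log (Zf P β) := by
        rw [← Finset.sum_mul, Qb_sum P hP β, one_mul]

lemma KL_Qb (P : α → ℝ) (hP : ∀ x, 0 < P x) (β : ℝ) :
    KL (Qb P β) P = (β - 1) * ((∑ x, P x ^ β * Real.log (P x)) / Zf P β)
      - Real.log (Zf P β) := by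
  have hpt : ∀ x, Qb P β x * Real.log (Qb P β x / P x)
      = (β - 1) * (P x ^ β * Real.log (P x) / Zf P β) - Qb P β x * Real.log (Zf P β) := by
    intro x
    rw [Real.log_div (Qb_pos P hP β x).ne' (hP x).ne', Qb_log P hP β x]
    simp only [Qb]
    ring
  rw [KL]
  calc (∑ x, Qb P β x * Real.log (Qb P β x / P x))
      = ∑ x, ((β - 1) * (P x ^ β * Real.log (P x) / Zf P β) - Qb P β x * Real.log (Zf P β)) :=
        Finset.sum_congr rfl (fun x _ => hpt x)
    _ = (β - 1) * ((∑ x, P x ^ β * Real.log (P x)) / Zf P β) - Real.log (Zf P β) := by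
        rw [Finset.sum_sub_distrib, ← Finset.mul_sum, ← Finset.sum_div, ← Finset.sum_mul,
          Qb_sum P hP β, one_mul]

lemma cont_D (P : α → ℝ) (hP : ∀ x, 0 < P x) :
    Continuous (fun β => KL (Qb P β) P) := by
  have hrpow : ∀ x : α, Continuous (fun β : ℝ => P x ^ β) := by
    intro x
    have : (fun β : ℝ => P x ^ β) = fun β => Real.exp (Real.log (P x) * β) := by
      funext β
      rw [Real.rpow_def_of_pos (hP x), mul_comm]
    rw [this]
    exact Real.continuous_exp.comp (continuous_const.mul continuous_id)
  have hZ : Continuous (fun β => Zf P β) := by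
    simp only [Zf]
    exact continuous_finset_sum _ (fun x _ => hrpow x)
  have hN : Continuous (fun β : ℝ => ∑ x, P x ^ β * Real.log (P x)) :=
    continuous_finset_sum _ (fun x _ => (hrpow x).mul continuous_const)
  have heq : (fun β => KL (Qb P β) P)
      = fun β => (β - 1) * ((∑ x, P x ^ β * Real.log (P x)) / Zf P β)
        - Real.log (Zf P β) := funext (fun β => KL_Qb P hP β)
  rw [heq]
  exact ((continuous_id.sub continuous_const).mul
    (hN.div hZ (fun β => (Zf_pos P hP β).ne'))).sub
    (hZ.log (fun β => (Zf_pos P hP β).ne'))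

/-- Upper bound on the objective of the tilted distribution. -/
lemma obj_bound (P : α → ℝ) (hP : ∀ x, 0 < P x) (M : ℝ) (x0 : α) (hM0 : P x0 = M)
    (hM : ∀ x, P x ≤ M) (β : ℝ) :
    (∑ x, Qb P β x * Real.log (1 / P x))
      ≤ -Real.log M + ∑ x, (P x / M) ^ β * Real.log (M / P x) := by
  have hMpos : 0 < M := hM0 ▸ hP x0
  have hZM : M ^ β ≤ Zf P β := by
    rw [← hM0, Zf]
    exact Finset.single_le_sum (fun x _ => (Real.rpow_pos_of_pos (hP x) β).le)
      (Finset.mem_univ x0)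
  have hQsum : ∑ x, Qb P β x = 1 := Qb_sum P hP β
  have hpt : ∀ x, Qb P β x * Real.log (1 / P x) + Qb P β x * Real.log M
      ≤ (P x / M) ^ β * Real.log (M / P x) := by
    intro x
    have h1 : Qb P β x * Real.log (1 / P x) + Qb P β x * Real.log M
        = Qb P β x * Real.log (M / P x) := by
      rw [Real.log_div one_ne_zero (hP x).ne', Real.log_one,
        Real.log_div hMpos.ne' (hP x).ne']
      ring
    rw [h1]
    have h2 : 0 ≤ Real.log (M / P x) :=
      Real.log_nonneg ((one_le_div (hP x)).mpr (hM x))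
    have h3 : Qb P β x ≤ (P x / M) ^ β := by
      rw [Real.div_rpow (hP x).le hMpos.le]
      exact div_le_div_of_nonneg_left (Real.rpow_pos_of_pos (hP x) β).le
        (Real.rpow_pos_of_pos hMpos β) hZM
    exact mul_le_mul_of_nonneg_right h3 h2
  have hs : ∑ x, (Qb P β x * Real.log (1 / P x) + Qb P β x * Real.log M)
      ≤ ∑ x, (P x / M) ^ β * Real.log (M / P x) := Finset.sum_le_sum (fun x _ => hpt x)
  rw [Finset.sum_add_distrib, ← Finset.sum_mul, hQsum, one_mul] at hs
  linarith

lemma T_tendsto (P : α → ℝ) (hP : ∀ x, 0 < P x) (M : ℝ) (hMpos : 0 < M)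
    (hM : ∀ x, P x ≤ M) :
    Filter.Tendsto (fun β : ℝ => ∑ x, (P x / M) ^ β * Real.log (M / P x))
      Filter.atTop (nhds 0) := by
  have h0 : (0 : ℝ) = ∑ _x : α, (0 : ℝ) := by simp
  rw [h0]
  apply tendsto_finset_sum
  intro x _
  rcases eq_or_lt_of_le (hM x) with h | h
  · have : (fun β : ℝ => (P x / M) ^ β * Real.log (M / P x)) = fun _ => 0 := by
      funext β
      rw [h, div_self hMpos.ne', Real.log_one, mul_zero]
    rw [this]
    exact tendsto_const_nhds
  · have hc0 : 0 < P x / M := div_pos (hP x) hMpos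
    have hc1 : P x / M < 1 := (div_lt_one hMpos).mpr h
    have := (tendsto_rpow_atTop_of_base_lt_one (P x / M) (by linarith) hc1).mul_const
      (Real.log (M / P x))
    rw [zero_mul] at this
    exact this

/-- Lower bound on the dual value: `-l ln Z(1+1/l) ≥ -ln M`. -/
lemma dual_lb (P : α → ℝ) (hP : ∀ x, 0 < P x) (hP1 : ∑ x, P x = 1)
    (M : ℝ) (hMpos : 0 < M) (hM : ∀ x, P x ≤ M) (l : ℝ) (hl : 0 < l) :
    -Real.log M ≤ -l * Real.log (∑ x, P x ^ (1 + 1 / l)) := by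
  have hZpos : (0:ℝ) < ∑ x, P x ^ (1 + 1/l) :=
    Finset.sum_pos (fun x _ => Real.rpow_pos_of_pos (hP x) _) univ_nonempty
  have hbd : ∑ x, P x ^ (1 + 1/l) ≤ M ^ (1/l) := by
    calc ∑ x, P x ^ (1 + 1/l) ≤ ∑ x, P x * M ^ (1/l) := by
          apply Finset.sum_le_sum
          intro x _
          rw [Real.rpow_add (hP x), Real.rpow_one]
          exact mul_le_mul_of_nonneg_left
            (Real.rpow_le_rpow (hP x).le (hM x) (by positivity)) (hP x).le
      _ = M ^ (1/l) := by rw [← Finset.sum_mul, hP1, one_mul]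
  have hlog : Real.log (∑ x, P x ^ (1 + 1/l)) ≤ (1/l) * Real.log M := by
    rw [← Real.log_rpow hMpos]
    exact Real.log_le_log hZpos hbd
  have := mul_le_mul_of_nonneg_left hlog hl.le
  rw [show l * ((1/l) * Real.log M) = Real.log M by field_simp] at this
  linarith

end Aux

/-- Gallager-style form of `R_w*(E0)`. -/
theorem stmt_1 {𝒳 : Type*} [Fintype 𝒳] [Nonempty 𝒳]
    (P : 𝒳 → ℝ) (hP : IsProb P) (hPpos : ∀ x, 0 < P x)
    (E0 : ℝ) (hE0 : 0 < E0) :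
    sInf {v | ∃ Q : 𝒳 → ℝ, IsProb Q ∧ KL Q P ≤ E0 ∧
        v = (∑ x, Q x * Real.log (1 / P x)) - E0}
      = sSup {v | ∃ l : ℝ, 0 < l ∧
          v = -l * Real.log (∑ x, P x ^ (1 + 1 / l)) - (1 + l) * E0} := by
  obtain ⟨hP0, hP1⟩ := hP
  set A := {v | ∃ Q : 𝒳 → ℝ, IsProb Q ∧ KL Q P ≤ E0 ∧
      v = (∑ x, Q x * Real.log (1 / P x)) - E0} with hAdef
  set B := {v | ∃ l : ℝ, 0 < l ∧
      v = -l * Real.log (∑ x, P x ^ (1 + 1 / l)) - (1 + l) * E0} with hBdef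
  obtain ⟨x0, -, hx0max⟩ :=
    Finset.exists_max_image Finset.univ P ⟨Classical.arbitrary 𝒳, Finset.mem_univ _⟩
  set M := P x0 with hMdef
  have hMpos : 0 < M := hPpos x0
  have hMax : ∀ x, P x ≤ M := fun x => hx0max x (Finset.mem_univ x)
  have hmem1 : ∀ Q : 𝒳 → ℝ, IsProb Q → KL Q P ≤ E0 →
      ((∑ x, Q x * Real.log (1 / P x)) - E0) ∈ A := fun Q h1 h2 => ⟨Q, h1, h2, rfl⟩
  have hmem2 : ∀ l : ℝ, 0 < l →
      (-l * Real.log (∑ x, P x ^ (1 + 1 / l)) - (1 + l) * E0) ∈ B :=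
    fun l hl => ⟨l, hl, rfl⟩
  have hKLPP : KL P P = 0 := by
    rw [KL]
    apply Finset.sum_eq_zero
    intro a _
    rw [div_self (hPpos a).ne', Real.log_one, mul_zero]
  have hAne : A.Nonempty := ⟨_, hmem1 P ⟨hP0, hP1⟩ (by rw [hKLPP]; exact hE0.le)⟩
  have hBne : B.Nonempty := ⟨_, hmem2 1 one_pos⟩
  have hle : ∀ b ∈ B, ∀ a ∈ A, b ≤ a := by
    rintro b ⟨l, hl, rfl⟩ a ⟨Q, hQ, hKL, rfl⟩
    have h1 := weak_dual P Q hPpos hQ.1 hQ.2 l hl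
    nlinarith [mul_le_mul_of_nonneg_left hKL hl.le]
  obtain ⟨b0, hb0⟩ := hBne
  obtain ⟨a0, ha0⟩ := hAne
  have hbddA : BddBelow A := ⟨b0, fun a ha => hle b0 hb0 a ha⟩
  have hbddB : BddAbove B := ⟨a0, fun b hb => hle b hb a0 ha0⟩
  have h1 : sSup B ≤ sInf A :=
    csSup_le ⟨b0, hb0⟩ (fun b hb => le_csInf ⟨a0, ha0⟩ (fun a ha => hle b hb a ha))
  have h2 : sInf A ≤ sSup B := by
    by_cases hcase : ∃ β, 1 < β ∧ E0 ≤ KL (Qb P β) P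
    · -- constraint binds: IVT gives a tilted distribution with KL = E0
      obtain ⟨β0, hβ0, hKβ0⟩ := hcase
      have hD1 : KL (Qb P 1) P = 0 := by
        rw [KL_Qb P hPpos 1]
        have hZ1 : Zf P 1 = 1 := by
          rw [Zf]
          simp only [Real.rpow_one]
          exact hP1
        rw [hZ1, Real.log_one]
        ring
      have hIVT : E0 ∈ (fun β => KL (Qb P β) P) '' Set.Icc 1 β0 := by
        apply intermediate_value_Icc hβ0.le ((cont_D P hPpos).continuousOn)
        rw [hD1]
        exact ⟨hE0.le, hKβ0⟩
      obtain ⟨β, hβmem, hβE'⟩ := hIVT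
      have hβE : KL (Qb P β) P = E0 := hβE'
      have hβ1 : 1 < β := by
        rcases eq_or_lt_of_le hβmem.1 with h | h
        · exfalso
          rw [← h, hD1] at hβE
          linarith
        · exact h
      have hβne : β - 1 ≠ 0 := sub_ne_zero.mpr hβ1.ne'
      set l := 1 / (β - 1) with hldef
      have hl : 0 < l := div_pos one_pos (by linarith)
      have hβl : 1 + 1 / l = β := by
        rw [hldef, one_div_one_div]
        ring
      have hQbprob : IsProb (Qb P β) := ⟨fun x => (Qb_pos P hPpos β x).le, Qb_sum P hPpos β⟩
      have hmemA : ((∑ x, Qb P β x * Real.log (1 / P x)) - E0) ∈ A :=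
        hmem1 _ hQbprob (le_of_eq hβE)
      have hmemB : (-l * Real.log (∑ x, P x ^ (1 + 1 / l)) - (1 + l) * E0) ∈ B := hmem2 l hl
      have hkey := key_id P hPpos β
      have hz : (∑ x, P x ^ (1 + 1 / l)) = Zf P β := by rw [hβl, Zf]
      have heq : (∑ x, Qb P β x * Real.log (1 / P x)) - E0
          = -l * Real.log (∑ x, P x ^ (1 + 1 / l)) - (1 + l) * E0 := by
        rw [hz]
        have hmul : (β - 1) * (∑ x, Qb P β x * Real.log (1 / P x))
            = -Real.log (Zf P β) - E0 := by
          rw [← hβE]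
          linarith
        have h4 : l * ((β - 1) * (∑ x, Qb P β x * Real.log (1 / P x)))
            = ∑ x, Qb P β x * Real.log (1 / P x) := by
          rw [hldef]
          field_simp
        rw [← h4, hmul]
        ring
      calc sInf A ≤ (∑ x, Qb P β x * Real.log (1 / P x)) - E0 := csInf_le hbddA hmemA
        _ = -l * Real.log (∑ x, P x ^ (1 + 1 / l)) - (1 + l) * E0 := heq
        _ ≤ sSup B := le_csSup hbddB hmemB
    · -- constraint slack: take β → ∞ and l → 0
      push_neg at hcase
      apply le_of_forall_pos_le_add
      intro ε hε
      have hT := T_tendsto P hPpos M hMpos hMax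
      have hev := (hT.eventually_lt_const (by positivity : (0:ℝ) < ε / 2)).and
        (Filter.eventually_gt_atTop 1)
      obtain ⟨β, hTβ, hβ1⟩ := hev.exists
      have hQbprob : IsProb (Qb P β) := ⟨fun x => (Qb_pos P hPpos β x).le, Qb_sum P hPpos β⟩
      have hmemA : ((∑ x, Qb P β x * Real.log (1 / P x)) - E0) ∈ A :=
        hmem1 _ hQbprob (hcase β hβ1).le
      have hb1 := obj_bound P hPpos M x0 hMdef.symm hMax β
      set l := ε / (2 * E0) with hldef
      have hl : 0 < l := by positivity
      have hmemB : (-l * Real.log (∑ x, P x ^ (1 + 1 / l)) - (1 + l) * E0) ∈ B := hmem2 l hl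
      have hlb := dual_lb P hPpos hP1 M hMpos hMax l hl
      have e1 : sInf A ≤ (∑ x, Qb P β x * Real.log (1 / P x)) - E0 := csInf_le hbddA hmemA
      have e2 : -l * Real.log (∑ x, P x ^ (1 + 1 / l)) - (1 + l) * E0 ≤ sSup B :=
        le_csSup hbddB hmemB
      have hlE : l * E0 = ε / 2 := by
        rw [hldef]
        field_simp
      linarith
  exact le_antisymm h2 h1
end

section
/- Let P be a probability distribution on a nonempty finite set 𝒳 with P(x) > 0 for all x, and let λ > 0. Then the minimum over all probability distributions Q on 𝒳 of { Σ_x Q(x) ln(1/P(x)) + λ D(Q‖P) } equals −λ ln( Σ_x P(x)^{1+1/λ} ). -/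
open Finset

/-- `min_Q { E_Q ln(1/P) + λ D(Q‖P) } = -λ ln Σ_x P(x)^{1+1/λ}`. -/
theorem stmt_5 {𝒳 : Type*} [Fintype 𝒳] [Nonempty 𝒳]
    (P : 𝒳 → ℝ) (hP : IsProb P) (hPpos : ∀ x, 0 < P x)
    (l : ℝ) (hl : 0 < l) :
    sInf {v | ∃ Q : 𝒳 → ℝ, IsProb Q ∧
        v = (∑ x, Q x * Real.log (1 / P x)) + l * KL Q P}
      = -l * Real.log (∑ x, P x ^ (1 + 1 / l)) := by
  set c : ℝ := 1 + 1 / l with hc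
  set Z : ℝ := ∑ x, P x ^ c with hZ
  have hZpos : 0 < Z :=
    Finset.sum_pos (fun x _ => Real.rpow_pos_of_pos (hPpos x) c) Finset.univ_nonempty
  set Qs : 𝒳 → ℝ := fun x => P x ^ c / Z with hQsdef
  have hQspos : ∀ x, 0 < Qs x := fun x => div_pos (Real.rpow_pos_of_pos (hPpos x) c) hZpos
  have hQs1 : ∑ x, Qs x = 1 := by
    simp only [hQsdef, ← Finset.sum_div, ← hZ]
    exact div_self hZpos.ne'
  have hlogQs : ∀ x, Real.log (Qs x) = c * Real.log (P x) - Real.log Z := by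
    intro x
    rw [hQsdef]
    rw [Real.log_div (Real.rpow_pos_of_pos (hPpos x) c).ne' hZpos.ne',
      Real.log_rpow (hPpos x)]
  have key : ∀ Q : 𝒳 → ℝ, IsProb Q →
      (∑ x, Q x * Real.log (1 / P x)) + l * KL Q P
        = l * (∑ x, Q x * Real.log (Q x / Qs x)) - l * Real.log Z := by
    intro Q hQ
    have hterm : ∀ x, Q x * Real.log (1 / P x) + l * (Q x * Real.log (Q x / P x))
        = l * (Q x * Real.log (Q x / Qs x)) - l * (Q x * Real.log Z) := by
      intro x
      rcases eq_or_lt_of_le (hQ.1 x) with h | h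
      · simp [← h]
      · rw [Real.log_div h.ne' (hQspos x).ne', Real.log_div h.ne' (hPpos x).ne',
          hlogQs x, Real.log_div one_ne_zero (hPpos x).ne', Real.log_one, hc]
        field_simp
        ring
    have hsum : (∑ x, Q x * Real.log (1 / P x)) + l * KL Q P
        = ∑ x, (Q x * Real.log (1 / P x) + l * (Q x * Real.log (Q x / P x))) := by
      rw [KL, Finset.mul_sum, ← Finset.sum_add_distrib]
    rw [hsum, Finset.sum_congr rfl (fun x _ => hterm x), Finset.sum_sub_distrib,
      ← Finset.mul_sum, ← Finset.mul_sum, ← Finset.sum_mul, hQ.2, one_mul]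
  have gibbs : ∀ Q : 𝒳 → ℝ, IsProb Q → 0 ≤ ∑ x, Q x * Real.log (Q x / Qs x) := by
    intro Q hQ
    have keyt : ∀ x, Q x - Qs x ≤ Q x * Real.log (Q x / Qs x) := by
      intro x
      rcases eq_or_lt_of_le (hQ.1 x) with h | h
      · simp [← h]
        linarith [(hQspos x).le]
      · have hx : 0 < Qs x / Q x := div_pos (hQspos x) h
        have h1 := Real.log_le_sub_one_of_pos hx
        have hlog : Real.log (Q x / Qs x) = - Real.log (Qs x / Q x) := by
          rw [← Real.log_inv]
          congr 1
          field_simp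
        rw [hlog]
        have h2 : 1 - Qs x / Q x ≤ -Real.log (Qs x / Q x) := by linarith
        calc Q x - Qs x = Q x * (1 - Qs x / Q x) := by field_simp
          _ ≤ Q x * (-Real.log (Qs x / Q x)) := mul_le_mul_of_nonneg_left h2 h.le
    calc (0:ℝ) = ∑ x, (Q x - Qs x) := by rw [Finset.sum_sub_distrib, hQ.2, hQs1]; ring
      _ ≤ _ := Finset.sum_le_sum (fun x _ => keyt x)
  have hlb : ∀ v ∈ {v | ∃ Q : 𝒳 → ℝ, IsProb Q ∧
      v = (∑ x, Q x * Real.log (1 / P x)) + l * KL Q P}, -l * Real.log Z ≤ v := by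
    rintro v ⟨Q, hQ, rfl⟩
    rw [key Q hQ]
    nlinarith [gibbs Q hQ]
  have hmem : -l * Real.log Z ∈ {v | ∃ Q : 𝒳 → ℝ, IsProb Q ∧
      v = (∑ x, Q x * Real.log (1 / P x)) + l * KL Q P} := by
    refine ⟨Qs, ⟨fun x => (hQspos x).le, hQs1⟩, ?_⟩
    rw [key Qs ⟨fun x => (hQspos x).le, hQs1⟩]
    have : ∑ x, Qs x * Real.log (Qs x / Qs x) = 0 := by
      simp [div_self (hQspos _).ne']
    rw [this]
    ring
  exact le_antisymm (csInf_le ⟨_, hlb⟩ hmem) (le_csInf ⟨_, hmem⟩ hlb)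
end

section
/- Let P_XY be a probability distribution on 𝒳×𝒴 with P_XY(x,y) > 0 for all (x,y), with 𝒳-marginal P_X, 𝒴-marginal P_Y, and conditional P_{X|Y}(x|y) = P_XY(x,y)/P_Y(y). Fix λ ∈ [0,1], ρ ≥ 0, and a probability distribution W on 𝒳 with W(x) > 0 for all x. Then the infimum, over all probability distributions Q_Y on 𝒴 and all stochastic kernels Q_{X|Y} (a probability distribution Q_{X|Y}(·|y) on 𝒳 for each y ∈ 𝒴), of { D(Q_Y‖P_Y) + Σ_y Q_Y(y) Σ_x Q_{X|Y}(x|y) [ ln( Q_{X|Y}(x|y)/P_{X|Y}(x|y) ) + (ρ+λ) ln(1/P_X(x)) + λ ln Q_{X|Y}(x|y) + ρ ln W(x) ] } equals −ln( Σ_y [ Σ_x ( P_XY(x,y) · P_X(x)^{ρ+λ} · W(x)^{−ρ} )^{1/(1+λ)} ]^{1+λ} ). (All terms of the form 0·ln 0 are interpreted as 0.) -/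
open Finset

lemma gibbs {α : Type*} [Fintype α] (Q c : α → ℝ) (hQ0 : ∀ a, 0 ≤ Q a)
    (hQ1 : ∑ a, Q a = 1) (hc : ∀ a, 0 < c a) :
    -Real.log (∑ a, c a) ≤ ∑ a, Q a * Real.log (Q a / c a) := by
  have hne : (Finset.univ : Finset α).Nonempty := by
    by_contra h
    rw [Finset.not_nonempty_iff_eq_empty] at h
    rw [h, Finset.sum_empty] at hQ1; norm_num at hQ1
  set Z := ∑ a, c a with hZdef
  have hZ : 0 < Z := Finset.sum_pos (fun a _ => hc a) hne
  have key : ∀ a, Q a - c a / Z ≤ Q a * Real.log (Q a / (c a / Z)) := by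
    intro a
    rcases (hQ0 a).eq_or_lt with h | h
    · simp only [← h, zero_mul, zero_sub, neg_nonpos]
      exact div_nonneg (hc a).le hZ.le
    · have h1 : Real.log ((c a / Z) / Q a) ≤ (c a / Z) / Q a - 1 :=
        Real.log_le_sub_one_of_pos (div_pos (div_pos (hc a) hZ) h)
      have h2 : Real.log (Q a / (c a / Z)) = -Real.log ((c a / Z) / Q a) := by
        rw [← Real.log_inv]; congr 1; field_simp
      rw [h2]
      have h3 := mul_le_mul_of_nonneg_left h1 (le_of_lt h)
      have h4 : Q a * ((c a / Z) / Q a) = c a / Z := by field_simp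
      nlinarith
  have hsum0 : ∑ a, (Q a - c a / Z) = 0 := by
    rw [Finset.sum_sub_distrib, hQ1, ← Finset.sum_div, ← hZdef, div_self hZ.ne']; ring
  have hsum : (0:ℝ) ≤ ∑ a, Q a * Real.log (Q a / (c a / Z)) := by
    have := Finset.sum_le_sum (fun a (_ : a ∈ Finset.univ) => key a)
    linarith [hsum0 ▸ this]
  have hlogZ : ∑ a, Q a * Real.log Z = Real.log Z := by
    rw [← Finset.sum_mul, hQ1, one_mul]
  have hsplit : ∑ a, Q a * Real.log (Q a / (c a / Z))
      = (∑ a, Q a * Real.log (Q a / c a)) + Real.log Z := by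
    rw [← hlogZ, ← Finset.sum_add_distrib]
    apply Finset.sum_congr rfl
    intro a _
    rcases (hQ0 a).eq_or_lt with h | h
    · simp [← h]
    · have hq : Q a / (c a / Z) = (Q a / c a) * Z := by
        field_simp
      rw [hq, Real.log_mul (ne_of_gt (div_pos h (hc a))) hZ.ne']; ring
  linarith [hsplit ▸ hsum]

lemma inner_identity {𝒳 : Type*} [Fintype 𝒳] (l r : ℝ) (hl : 0 < 1 + l)
    (K pXY pX w : 𝒳 → ℝ) (py : ℝ)
    (hK : ∀ x, 0 ≤ K x) (hpXY : ∀ x, 0 < pXY x) (hpX : ∀ x, 0 < pX x)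
    (hw : ∀ x, 0 < w x) (hpy : 0 < py) :
    ∑ x, K x * (Real.log (K x / (pXY x / py)) + (r + l) * Real.log (1 / pX x)
        + l * Real.log (K x) + r * Real.log (w x))
    = (1 + l) * ∑ x, K x * Real.log (K x /
        ((pXY x * pX x ^ (r + l) * w x ^ (-r)) ^ (1 / (1 + l)) / py ^ (1 / (1 + l)))) := by
  rw [Finset.mul_sum]
  apply Finset.sum_congr rfl
  intro x _
  have h1 := hpXY x
  have h2 := hpX x
  have h3 := hw x
  rcases (hK x).eq_or_lt with h | h
  · simp [← h]
  · have hc : (0:ℝ) < (pXY x * pX x ^ (r + l) * w x ^ (-r)) ^ (1 / (1 + l)) / py ^ (1 / (1 + l)) := by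
      positivity
    have hlogc : Real.log ((pXY x * pX x ^ (r + l) * w x ^ (-r)) ^ (1 / (1 + l)) / py ^ (1 / (1 + l)))
        = (1 / (1 + l)) * (Real.log (pXY x) + (r + l) * Real.log (pX x)
            + (-r) * Real.log (w x) - Real.log py) := by
      rw [Real.log_div (by positivity) (by positivity),
        Real.log_rpow (by positivity), Real.log_rpow hpy,
        Real.log_mul (by positivity) (by positivity),
        Real.log_mul (by positivity) (by positivity),
        Real.log_rpow h2, Real.log_rpow h3]
      ring
    have e1 : Real.log (K x / (pXY x / py)) = Real.log (K x) - (Real.log (pXY x) - Real.log py) := by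
      rw [Real.log_div h.ne' (by positivity), Real.log_div h1.ne' hpy.ne']
    have e2 : Real.log ((1:ℝ) / pX x) = -Real.log (pX x) := by
      rw [one_div, Real.log_inv]
    rw [Real.log_div h.ne' hc.ne', hlogc, e1, e2]
    have hcanc : (1 + l) * (1 / (1 + l)) = 1 := by field_simp
    linear_combination (K x * (Real.log (pXY x) + (r + l) * Real.log (pX x)
      + (-r) * Real.log (w x) - Real.log py)) * hcanc


/-- the inner minimization over `Q_Y` and the kernel `Q_{X|Y}`
in the proof of Theorem 1, for a fixed distribution `W`. -/
theorem stmt_6 {𝒳 𝒴 : Type*} [Fintype 𝒳] [Nonempty 𝒳] [Fintype 𝒴] [Nonempty 𝒴]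
    (P : 𝒳 × 𝒴 → ℝ) (hP : IsProb P) (hPpos : ∀ p, 0 < P p)
    (l r : ℝ) (hl0 : 0 ≤ l) (hl1 : l ≤ 1) (hr : 0 ≤ r)
    (W : 𝒳 → ℝ) (hW : IsProb W) (hWpos : ∀ x, 0 < W x) :
    sInf {v | ∃ (QY : 𝒴 → ℝ) (K : 𝒴 → 𝒳 → ℝ),
        IsProb QY ∧ (∀ y, IsProb (K y)) ∧
        v = KL QY (margY P) + ∑ y, QY y * ∑ x, K y x *
            (Real.log (K y x / (P (x, y) / margY P y))
              + (r + l) * Real.log (1 / margX P x)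
              + l * Real.log (K y x) + r * Real.log (W x))}
      = -Real.log (∑ y,
          (∑ x, (P (x, y) * margX P x ^ (r + l) * W x ^ (-r)) ^ (1 / (1 + l)))
            ^ (1 + l)) := by
  have hl : (0:ℝ) < 1 + l := by linarith
  have hPY : ∀ y, 0 < margY P y :=
    fun y => Finset.sum_pos (fun x _ => hPpos _) Finset.univ_nonempty
  have hPX : ∀ x, 0 < margX P x :=
    fun x => Finset.sum_pos (fun y _ => hPpos _) Finset.univ_nonempty
  obtain ⟨A, hAdef⟩ : ∃ A : 𝒴 → 𝒳 → ℝ, ∀ y x,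
      A y x = (P (x, y) * margX P x ^ (r + l) * W x ^ (-r)) ^ (1 / (1 + l)) :=
    ⟨_, fun y x => rfl⟩
  have hA : ∀ y x, 0 < A y x := by
    intro y x
    rw [hAdef]
    have h1 := hPpos (x, y); have h2 := hPX x; have h3 := hWpos x
    positivity
  simp_rw [← hAdef]
  obtain ⟨S, hSdef⟩ : ∃ S : 𝒴 → ℝ, ∀ y, S y = ∑ x, A y x := ⟨_, fun y => rfl⟩
  have hS : ∀ y, 0 < S y :=
    fun y => (hSdef y) ▸ Finset.sum_pos (fun x _ => hA y x) Finset.univ_nonempty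
  simp_rw [← hSdef]
  obtain ⟨Z, hZdef⟩ : ∃ Z : ℝ, Z = ∑ y, S y ^ (1 + l) := ⟨_, rfl⟩
  have hZ : 0 < Z :=
    hZdef ▸ Finset.sum_pos (fun y _ => Real.rpow_pos_of_pos (hS y) _) Finset.univ_nonempty
  rw [← hZdef]
  apply IsLeast.csInf_eq
  constructor
  · -- membership
    have hsumQ : ∑ y, S y ^ (1 + l) / Z = 1 := by
      rw [← Finset.sum_div, ← hZdef, div_self hZ.ne']
    refine ⟨fun y => S y ^ (1 + l) / Z, fun y x => A y x / S y,
      ⟨fun y => div_nonneg (Real.rpow_pos_of_pos (hS y) _).le hZ.le, hsumQ⟩,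
      fun y => ⟨fun x => div_nonneg (hA y x).le (hS y).le, by
        rw [← Finset.sum_div, ← hSdef, div_self (hS y).ne']⟩, ?_⟩
    have hinner : ∀ y, (∑ x, (A y x / S y) * (Real.log ((A y x / S y) / (P (x, y) / margY P y))
        + (r + l) * Real.log (1 / margX P x) + l * Real.log (A y x / S y) + r * Real.log (W x)))
        = Real.log (margY P y) - (1 + l) * Real.log (S y) := by
      intro y
      rw [inner_identity l r hl (fun x => A y x / S y) (fun x => P (x, y)) (margX P) W
        (margY P y) (fun x => div_nonneg (hA y x).le (hS y).le) (fun x => hPpos _)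
        hPX hWpos (hPY y)]
      simp_rw [← hAdef]
      have hq : ∀ x, (A y x / S y) / (A y x / margY P y ^ (1 / (1 + l)))
          = margY P y ^ (1 / (1 + l)) / S y := by
        intro x
        have h1 := (hA y x).ne'
        have h2 := (hS y).ne'
        have h3 := (Real.rpow_pos_of_pos (hPY y) (1 / (1 + l))).ne'
        field_simp
      simp_rw [hq]
      rw [← Finset.sum_mul, ← Finset.sum_div, ← hSdef, div_self (hS y).ne', one_mul,
        Real.log_div (Real.rpow_pos_of_pos (hPY y) _).ne' (hS y).ne',
        Real.log_rpow (hPY y)]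
      have hcanc : (1 + l) * (1 / (1 + l)) = 1 := by field_simp
      linear_combination Real.log (margY P y) * hcanc
    simp_rw [hinner]
    rw [KL, ← Finset.sum_add_distrib]
    have hterm : ∀ y ∈ Finset.univ, S y ^ (1 + l) / Z * Real.log ((S y ^ (1 + l) / Z) / margY P y)
        + S y ^ (1 + l) / Z * (Real.log (margY P y) - (1 + l) * Real.log (S y))
        = S y ^ (1 + l) / Z * (-Real.log Z) := by
      intro y _
      have e : Real.log (S y ^ (1 + l) / Z / margY P y)
          = (1 + l) * Real.log (S y) - Real.log Z - Real.log (margY P y) := by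
        rw [Real.log_div (div_pos (Real.rpow_pos_of_pos (hS y) _) hZ).ne' (hPY y).ne',
          Real.log_div (Real.rpow_pos_of_pos (hS y) _).ne' hZ.ne',
          Real.log_rpow (hS y)]
      rw [e]; ring
    rw [Finset.sum_congr rfl hterm, ← Finset.sum_mul, hsumQ, one_mul]
  · -- lower bound
    rintro v ⟨QY, K, hQY, hK, rfl⟩
    have hEy : ∀ y, (∑ x, K y x * (Real.log (K y x / (P (x, y) / margY P y))
        + (r + l) * Real.log (1 / margX P x) + l * Real.log (K y x) + r * Real.log (W x)))
        = (1 + l) * ∑ x, K y x * Real.log (K y x / (A y x / margY P y ^ (1 / (1 + l)))) := by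
      intro y
      rw [inner_identity l r hl (K y) (fun x => P (x, y)) (margX P) W
        (margY P y) (hK y).1 (fun x => hPpos _) hPX hWpos (hPY y)]
      simp_rw [← hAdef]
    simp_rw [hEy]
    have hin : ∀ y, -Real.log (S y / margY P y ^ (1 / (1 + l)))
        ≤ ∑ x, K y x * Real.log (K y x / (A y x / margY P y ^ (1 / (1 + l)))) := by
      intro y
      have := gibbs (K y) (fun x => A y x / margY P y ^ (1 / (1 + l))) (hK y).1 (hK y).2
        (fun x => div_pos (hA y x) (Real.rpow_pos_of_pos (hPY y) _))
      rwa [← Finset.sum_div, ← hSdef y] at this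
    have key1 : ∀ y, QY y * Real.log (QY y / margY P y)
        + QY y * ((1 + l) * (-Real.log (S y / margY P y ^ (1 / (1 + l)))))
        = QY y * Real.log (QY y / S y ^ (1 + l)) := by
      intro y
      rcases (hQY.1 y).eq_or_lt with h | h
      · simp [← h]
      · have e1 : Real.log (S y / margY P y ^ (1 / (1 + l)))
            = Real.log (S y) - (1 / (1 + l)) * Real.log (margY P y) := by
          rw [Real.log_div (hS y).ne' (Real.rpow_pos_of_pos (hPY y) _).ne',
            Real.log_rpow (hPY y)]
        have e2 : Real.log (QY y / margY P y) = Real.log (QY y) - Real.log (margY P y) :=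
          Real.log_div h.ne' (hPY y).ne'
        have e3 : Real.log (QY y / S y ^ (1 + l))
            = Real.log (QY y) - (1 + l) * Real.log (S y) := by
          rw [Real.log_div h.ne' (Real.rpow_pos_of_pos (hS y) _).ne',
            Real.log_rpow (hS y)]
        rw [e1, e2, e3]
        have hcanc : (1 + l) * (1 / (1 + l)) = 1 := by field_simp
        linear_combination QY y * Real.log (margY P y) * hcanc
    calc -Real.log Z = -Real.log (∑ y, S y ^ (1 + l)) := by rw [hZdef]
      _ ≤ ∑ y, QY y * Real.log (QY y / S y ^ (1 + l)) :=
          gibbs QY _ hQY.1 hQY.2 (fun y => Real.rpow_pos_of_pos (hS y) _)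
      _ = ∑ y, (QY y * Real.log (QY y / margY P y)
            + QY y * ((1 + l) * (-Real.log (S y / margY P y ^ (1 / (1 + l)))))) :=
          (Finset.sum_congr rfl (fun y _ => (key1 y).symm))
      _ ≤ KL QY (margY P) + ∑ y, QY y * ((1 + l)
            * ∑ x, K y x * Real.log (K y x / (A y x / margY P y ^ (1 / (1 + l))))) := by
          rw [KL, ← Finset.sum_add_distrib]
          apply Finset.sum_le_sum
          intro y _
          have := mul_le_mul_of_nonneg_left
            (mul_le_mul_of_nonneg_left (hin y) hl.le) (hQY.1 y)
          linarith
end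

section
/- Let P_XY be a probability distribution on 𝒳×𝒴 with P_XY(x,y) > 0 for all (x,y), with 𝒳-marginal P_X, and fix λ ∈ [0,1] and ρ ≥ 0. Then the function f defined on probability distributions W on 𝒳 with W(x) > 0 for all x by f(W) = −ln( Σ_y [ Σ_x ( P_XY(x,y) · P_X(x)^{ρ+λ} · W(x)^{−ρ} )^{1/(1+λ)} ]^{1+λ} ) is concave: for all such W₀, W₁ and all t ∈ [0,1], f( (1−t)W₀ + tW₁ ) ≥ (1−t) f(W₀) + t f(W₁). -/
open Finset

/-- The function `f(W)` of Theorem 1's discussion. -/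
noncomputable def fGal {𝒳 𝒴 : Type*} [Fintype 𝒳] [Fintype 𝒴]
    (P : 𝒳 × 𝒴 → ℝ) (l r : ℝ) (W : 𝒳 → ℝ) : ℝ :=
  -Real.log (∑ y,
    (∑ x, (P (x, y) * margX P x ^ (r + l) * W x ^ (-r)) ^ (1 / (1 + l))) ^ (1 + l))

/-- Hölder: `∑ A^(1-t) B^t ≤ (∑A)^(1-t) (∑B)^t`. -/
lemma holder_geom {ι : Type*} [Fintype ι] (A B : ι → ℝ) (hA : ∀ i, 0 ≤ A i)
    (hB : ∀ i, 0 ≤ B i) {t : ℝ} (ht0 : 0 < t) (ht1 : t < 1) :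
    ∑ i, A i ^ (1 - t) * B i ^ t ≤ (∑ i, A i) ^ (1 - t) * (∑ i, B i) ^ t := by
  have h1t : 0 < 1 - t := by linarith
  have hpq : Real.HolderConjugate (1/(1-t)) (1/t) := by
    constructor
    · rw [one_div, inv_inv, one_div, inv_inv, inv_one]; ring
    · positivity
    · positivity
  have h := Real.inner_le_Lp_mul_Lq_of_nonneg (s := (univ : Finset ι))
    (f := fun i => A i ^ (1 - t)) (g := fun i => B i ^ t) hpq
    (fun i _ => Real.rpow_nonneg (hA i) _) (fun i _ => Real.rpow_nonneg (hB i) _)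
  simp only [one_div_one_div] at h
  calc ∑ i, A i ^ (1 - t) * B i ^ t
      ≤ (∑ i, (A i ^ (1-t)) ^ (1/(1-t))) ^ (1-t) *
        (∑ i, (B i ^ t) ^ (1/t)) ^ t := h
    _ = (∑ i, A i) ^ (1 - t) * (∑ i, B i) ^ t := by
        congr 2 <;> apply Finset.sum_congr rfl <;> intro i _
        · rw [← Real.rpow_mul (hA i), mul_one_div, div_self h1t.ne', Real.rpow_one]
        · rw [← Real.rpow_mul (hB i), mul_one_div, div_self ht0.ne', Real.rpow_one]

/-- `(X^(1-t) * Y^t)^s = (X^s)^(1-t) * (Y^s)^t` for nonneg `X Y`. -/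
lemma rpow_geom_comm {X Y s t : ℝ} (hX : 0 ≤ X) (hY : 0 ≤ Y) :
    (X ^ (1-t) * Y ^ t) ^ s = (X ^ s) ^ (1-t) * (Y ^ s) ^ t := by
  rw [Real.mul_rpow (Real.rpow_nonneg hX _) (Real.rpow_nonneg hY _),
    ← Real.rpow_mul hX, ← Real.rpow_mul hY, ← Real.rpow_mul hX, ← Real.rpow_mul hY,
    mul_comm (1-t) s, mul_comm t s]

/-- `f(W)` is concave in `W`. -/
theorem stmt_7 {𝒳 𝒴 : Type*} [Fintype 𝒳] [Nonempty 𝒳] [Fintype 𝒴] [Nonempty 𝒴]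
    (P : 𝒳 × 𝒴 → ℝ) (hP : IsProb P) (hPpos : ∀ p, 0 < P p)
    (l r : ℝ) (hl0 : 0 ≤ l) (hl1 : l ≤ 1) (hr : 0 ≤ r)
    (W0 W1 : 𝒳 → ℝ) (hW0 : IsProb W0) (hW0pos : ∀ x, 0 < W0 x)
    (hW1 : IsProb W1) (hW1pos : ∀ x, 0 < W1 x)
    (t : ℝ) (ht0 : 0 ≤ t) (ht1 : t ≤ 1) :
    (1 - t) * fGal P l r W0 + t * fGal P l r W1 ≤
      fGal P l r (fun x => (1 - t) * W0 x + t * W1 x) := by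
  rcases eq_or_lt_of_le ht0 with h0 | h0
  · have : (fun x => (1 - t) * W0 x + t * W1 x) = W0 := by
      funext x; rw [← h0]; ring
    rw [this, ← h0]; ring_nf; rfl
  rcases eq_or_lt_of_le ht1 with h1 | h1
  · have : (fun x => (1 - t) * W0 x + t * W1 x) = W1 := by
      funext x; rw [h1]; ring
    rw [this, h1]; ring_nf; rfl
  -- now 0 < t < 1
  set s : ℝ := 1 / (1 + l) with hs
  have hl : (0:ℝ) < 1 + l := by linarith
  have hspos : 0 < s := by positivity
  set c : 𝒳 → 𝒴 → ℝ := fun x y => P (x, y) * margX P x ^ (r + l) with hc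
  have hcpos : ∀ x y, 0 < c x y := by
    intro x y
    have : 0 < margX P x := Finset.sum_pos (fun y _ => hPpos _) univ_nonempty
    exact mul_pos (hPpos _) (Real.rpow_pos_of_pos this _)
  set Wt : 𝒳 → ℝ := fun x => (1 - t) * W0 x + t * W1 x with hWt
  have hWtpos : ∀ x, 0 < Wt x := by
    intro x
    have h1t : 0 < 1 - t := by linarith
    have := mul_pos h1t (hW0pos x); have := mul_pos h0 (hW1pos x)
    show 0 < (1 - t) * W0 x + t * W1 x
    linarith
  -- termwise: c x y * Wt x ^ (-r) ≤ (c x y * W0 x ^ (-r))^(1-t) * (c x y * W1 x ^(-r))^t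
  have hterm : ∀ x y, c x y * Wt x ^ (-r) ≤
      (c x y * W0 x ^ (-r)) ^ (1 - t) * (c x y * W1 x ^ (-r)) ^ t := by
    intro x y
    have hgm : W0 x ^ (1 - t) * W1 x ^ t ≤ Wt x :=
      Real.geom_mean_le_arith_mean2_weighted (by linarith) ht0 (hW0pos x).le
        (hW1pos x).le (by ring)
    have h1 : Wt x ^ (-r) ≤ (W0 x ^ (1 - t) * W1 x ^ t) ^ (-r) :=
      Real.rpow_le_rpow_of_nonpos (mul_pos (Real.rpow_pos_of_pos (hW0pos x) _)
        (Real.rpow_pos_of_pos (hW1pos x) _)) hgm (by linarith)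
    have h2 : (W0 x ^ (1 - t) * W1 x ^ t) ^ (-r) =
        (W0 x ^ (-r)) ^ (1 - t) * (W1 x ^ (-r)) ^ t :=
      rpow_geom_comm (hW0pos x).le (hW1pos x).le
    calc c x y * Wt x ^ (-r) ≤ c x y * ((W0 x ^ (-r)) ^ (1-t) * (W1 x ^ (-r)) ^ t) := by
          rw [← h2]; exact mul_le_mul_of_nonneg_left h1 (hcpos x y).le
      _ = (c x y * W0 x ^ (-r)) ^ (1 - t) * (c x y * W1 x ^ (-r)) ^ t := by
          rw [Real.mul_rpow (hcpos x y).le (Real.rpow_nonneg (hW0pos x).le _),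
            Real.mul_rpow (hcpos x y).le (Real.rpow_nonneg (hW1pos x).le _)]
          have hcs : c x y = c x y ^ (1 - t) * c x y ^ t := by
            rw [← Real.rpow_add (hcpos x y)]; simp
          nth_rewrite 1 [hcs]; ring
  -- inner sums
  have hbase : ∀ (W : 𝒳 → ℝ), (∀ x, 0 < W x) → ∀ x y, 0 < c x y * W x ^ (-r) :=
    fun W hW x y => mul_pos (hcpos x y) (Real.rpow_pos_of_pos (hW x) _)
  set S : (𝒳 → ℝ) → 𝒴 → ℝ := fun W y => ∑ x, (c x y * W x ^ (-r)) ^ s with hS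
  have hSpos : ∀ (W : 𝒳 → ℝ), (∀ x, 0 < W x) → ∀ y, 0 < S W y := by
    intro W hW y
    exact Finset.sum_pos (fun x _ => Real.rpow_pos_of_pos
      (mul_pos (hcpos x y) (Real.rpow_pos_of_pos (hW x) _)) _) univ_nonempty
  have hinner : ∀ y, S Wt y ≤ S W0 y ^ (1 - t) * S W1 y ^ t := by
    intro y
    have step1 : S Wt y ≤ ∑ x, ((c x y * W0 x ^ (-r)) ^ s) ^ (1-t) *
        ((c x y * W1 x ^ (-r)) ^ s) ^ t := by
      apply Finset.sum_le_sum
      intro x _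
      rw [← rpow_geom_comm (hbase W0 hW0pos x y).le (hbase W1 hW1pos x y).le]
      exact Real.rpow_le_rpow (hbase Wt hWtpos x y).le (hterm x y) hspos.le
    refine step1.trans ?_
    exact holder_geom _ _ (fun x => (Real.rpow_pos_of_pos (hbase W0 hW0pos x y) _).le)
      (fun x => (Real.rpow_pos_of_pos (hbase W1 hW1pos x y) _).le) h0 h1
  -- outer sums
  set G : (𝒳 → ℝ) → ℝ := fun W => ∑ y, S W y ^ (1 + l) with hG
  have hGpos : ∀ (W : 𝒳 → ℝ), (∀ x, 0 < W x) → 0 < G W := by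
    intro W hW
    exact Finset.sum_pos (fun y _ => Real.rpow_pos_of_pos (hSpos W hW y) _) univ_nonempty
  have houter : G Wt ≤ G W0 ^ (1 - t) * G W1 ^ t := by
    have step1 : G Wt ≤ ∑ y, (S W0 y ^ (1+l)) ^ (1-t) * (S W1 y ^ (1+l)) ^ t := by
      apply Finset.sum_le_sum
      intro y _
      rw [← rpow_geom_comm (hSpos W0 hW0pos y).le (hSpos W1 hW1pos y).le]
      exact Real.rpow_le_rpow (hSpos Wt hWtpos y).le (hinner y) hl.le
    refine step1.trans ?_
    exact holder_geom _ _ (fun y => (Real.rpow_pos_of_pos (hSpos W0 hW0pos y) _).le)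
      (fun y => (Real.rpow_pos_of_pos (hSpos W1 hW1pos y) _).le) h0 h1
  -- conclude via log
  have hlog : Real.log (G Wt) ≤ (1 - t) * Real.log (G W0) + t * Real.log (G W1) := by
    calc Real.log (G Wt) ≤ Real.log (G W0 ^ (1-t) * G W1 ^ t) :=
          Real.log_le_log (hGpos Wt hWtpos) houter
      _ = (1 - t) * Real.log (G W0) + t * Real.log (G W1) := by
          rw [Real.log_mul (Real.rpow_pos_of_pos (hGpos W0 hW0pos) _).ne'
            (Real.rpow_pos_of_pos (hGpos W1 hW1pos) _).ne',
            Real.log_rpow (hGpos W0 hW0pos), Real.log_rpow (hGpos W1 hW1pos)]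
  have hid : ∀ (W : 𝒳 → ℝ), fGal P l r W = -Real.log (G W) := by
    intro W; rfl
  rw [hid, hid, hid]
  linarith
end

section
/- Let 𝒳 be a nonempty finite set with |𝒳| = M, let G be a transitive group of permutations of 𝒳, and take 𝒴 = G. Let p be a probability distribution on 𝒳 with p(x) > 0 for all x, and define the joint probability distribution P_XY on 𝒳×G by P_XY(x,g) = (1/|G|) · p(g(x)); its 𝒳-marginal P_X is then the uniform distribution on 𝒳 (P_X(x) = 1/M). Fix λ ∈ [0,1] and ρ ≥ 0, and for probability distributions W on 𝒳 with W(x) > 0 for all x define f(W) = −ln( Σ_{g∈G} [ Σ_x ( P_XY(x,g) · P_X(x)^{ρ+λ} · W(x)^{−ρ} )^{1/(1+λ)} ]^{1+λ} ). Then for every such W, f(W) ≤ f(U), where U is the uniform distribution on 𝒳 (U(x) = 1/M); i.e., the uniform distribution maximizes f. -/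
open Finset

lemma jensen_neg_rpow {ι : Type*} (t : Finset ι) (w z : ι → ℝ)
    (hw : ∀ i ∈ t, 0 ≤ w i) (hw' : ∑ i ∈ t, w i = 1)
    (hz : ∀ i ∈ t, 0 < z i) {s : ℝ} (hs : 0 ≤ s) :
    (∑ i ∈ t, w i * z i) ^ (-s) ≤ ∑ i ∈ t, w i * z i ^ (-s) := by
  have hA : 0 < ∑ i ∈ t, w i * z i := by
    obtain ⟨i, hi, hwi⟩ : ∃ i ∈ t, 0 < w i := by
      by_contra hc
      push_neg at hc
      have h0 : ∑ i ∈ t, w i = 0 :=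
        Finset.sum_eq_zero fun i hi => le_antisymm (hc i hi) (hw i hi)
      rw [h0] at hw'; exact one_ne_zero hw'.symm
    exact Finset.sum_pos' (fun i hi => mul_nonneg (hw i hi) (hz i hi).le)
      ⟨i, hi, mul_pos hwi (hz i hi)⟩
  have hlog : ∑ i ∈ t, w i * Real.log (z i) ≤ Real.log (∑ i ∈ t, w i * z i) := by
    have := (strictConcaveOn_log_Ioi.concaveOn).le_map_sum hw hw'
      (fun i hi => Set.mem_Ioi.mpr (hz i hi))
    simpa [smul_eq_mul] using this
  calc (∑ i ∈ t, w i * z i) ^ (-s)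
      = Real.exp (Real.log (∑ i ∈ t, w i * z i) * (-s)) := by
        rw [← Real.rpow_def_of_pos hA]
    _ ≤ Real.exp (∑ i ∈ t, w i * (Real.log (z i) * (-s))) := by
        apply Real.exp_le_exp.mpr
        have h1 : ∑ i ∈ t, w i * (Real.log (z i) * (-s))
            = (∑ i ∈ t, w i * Real.log (z i)) * (-s) := by
          rw [Finset.sum_mul]; exact Finset.sum_congr rfl fun i _ => by ring
        rw [h1]
        exact mul_le_mul_of_nonpos_right hlog (neg_nonpos.mpr hs)
    _ ≤ ∑ i ∈ t, w i * Real.exp (Real.log (z i) * (-s)) := by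
        have := convexOn_exp.map_sum_le (p := fun i => Real.log (z i) * (-s)) hw hw'
          (fun i _ => Set.mem_univ _)
        simpa [smul_eq_mul] using this
    _ = ∑ i ∈ t, w i * z i ^ (-s) := by
        refine Finset.sum_congr rfl fun i hi => ?_
        rw [← Real.rpow_def_of_pos (hz i hi)]

attribute [local instance] Classical.propDecidable

/-- symmetry — for a transitive permutation group `G` acting on `𝒳`,
the joint distribution `P_XY(x,g) = p(g(x))/|G|` (whose 𝒳-marginal `P_X` is then
uniform), the uniform distribution `U` maximizes `f(W)`. -/
theorem stmt_8 {𝒳 : Type*} [Fintype 𝒳] [DecidableEq 𝒳] [Nonempty 𝒳]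
    (G : Subgroup (Equiv.Perm 𝒳))
    (hTrans : ∀ x x' : 𝒳, ∃ g ∈ G, g x = x')
    (p : 𝒳 → ℝ) (hp : IsProb p) (hppos : ∀ x, 0 < p x)
    (l r : ℝ) (hl0 : 0 ≤ l) (hl1 : l ≤ 1) (hr : 0 ≤ r)
    (PXY : 𝒳 × G → ℝ)
    (hPXY : PXY = fun q => (1 / (Fintype.card G : ℝ)) * p ((q.2 : Equiv.Perm 𝒳) q.1))
    (PX : 𝒳 → ℝ) (hPX : PX = margX PXY)
    (f : (𝒳 → ℝ) → ℝ)
    (hf : f = fun W => -Real.log (∑ g : G,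
        (∑ x, (PXY (x, g) * PX x ^ (r + l) * W x ^ (-r)) ^ (1 / (1 + l))) ^ (1 + l)))
    (W : 𝒳 → ℝ) (hW : IsProb W) (hWpos : ∀ x, 0 < W x) :
    f W ≤ f (fun _ => 1 / (Fintype.card 𝒳 : ℝ)) := by
  have hM0 : (0:ℝ) < (Fintype.card 𝒳 : ℝ) := by exact_mod_cast Fintype.card_pos
  have hG0 : (0:ℝ) < (Fintype.card G : ℝ) := by exact_mod_cast Fintype.card_pos
  set M : ℝ := (Fintype.card 𝒳 : ℝ) with hMdef
  set nG : ℝ := (Fintype.card G : ℝ) with hnGdef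
  set q : ℝ := 1 + l with hqdef
  have hq0 : 0 < q := by rw [hqdef]; linarith
  have hq1 : 1 ≤ q := by rw [hqdef]; linarith
  -- counting lemma
  have key : ∀ (φ : 𝒳 → ℝ) (x : 𝒳),
      ∑ g : G, φ ((g : Equiv.Perm 𝒳) x) = nG / M * ∑ y, φ y := by
    intro φ x
    have hconst : ∀ x' : 𝒳,
        ∑ g : G, φ ((g : Equiv.Perm 𝒳) x') = ∑ g : G, φ ((g : Equiv.Perm 𝒳) x) := by
      intro x'
      obtain ⟨h, hhG, hhx⟩ := hTrans x x'
      calc ∑ g : G, φ ((g : Equiv.Perm 𝒳) x')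
          = ∑ g : G, φ (((g * ⟨h, hhG⟩ : G) : Equiv.Perm 𝒳) x) := by
            refine Finset.sum_congr rfl fun g _ => ?_
            simp [← hhx, Equiv.Perm.mul_apply]
        _ = ∑ g : G, φ ((g : Equiv.Perm 𝒳) x) :=
            Fintype.sum_equiv (Equiv.mulRight (⟨h, hhG⟩ : G)) _ _ (fun g => rfl)
    have htot : ∑ x' : 𝒳, ∑ g : G, φ ((g : Equiv.Perm 𝒳) x') = nG * ∑ y, φ y := by
      rw [Finset.sum_comm]
      have h1 : ∀ g : G, ∑ x' : 𝒳, φ ((g : Equiv.Perm 𝒳) x') = ∑ y, φ y :=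
        fun g => Equiv.sum_comp (g : Equiv.Perm 𝒳) φ
      rw [Finset.sum_congr rfl fun g _ => h1 g, Finset.sum_const, Finset.card_univ,
        nsmul_eq_mul]
    have hMS : M * ∑ g : G, φ ((g : Equiv.Perm 𝒳) x) = nG * ∑ y, φ y := by
      rw [← htot, Finset.sum_congr rfl fun x' _ => hconst x', Finset.sum_const,
        Finset.card_univ, nsmul_eq_mul]
    rw [div_mul_eq_mul_div, eq_div_iff (ne_of_gt hM0)]
    linarith [hMS]
  -- PX is uniform
  have hPXu : ∀ x, PX x = 1 / M := by
    intro x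
    have hk := key p x
    rw [hp.2, mul_one] at hk
    rw [hPX]
    show (∑ g : G, PXY (x, g)) = 1 / M
    simp only [hPXY]
    rw [← Finset.mul_sum, hk]
    field_simp
  have hP0 : ∀ (g : G) (x : 𝒳), 0 < PXY (x, g) := by
    intro g x
    simp only [hPXY]
    exact mul_pos (by positivity) (hppos _)
  -- abbreviations
  set a : G → 𝒳 → ℝ := fun g x => (PXY (x, g) * PX x ^ (r + l)) ^ (1 / q) with hadef
  have hapos : ∀ g x, 0 < a g x := by
    intro g x
    apply Real.rpow_pos_of_pos
    exact mul_pos (hP0 g x) (Real.rpow_pos_of_pos (by rw [hPXu]; positivity) _)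
  set inn : (𝒳 → ℝ) → G → ℝ := fun V g => ∑ x, a g x * V x ^ (-(r / q)) with hinndef
  have hinnpos : ∀ (V : 𝒳 → ℝ), (∀ x, 0 < V x) → ∀ g, 0 < inn V g := by
    intro V hV g
    exact Finset.sum_pos (fun x _ => mul_pos (hapos g x) (Real.rpow_pos_of_pos (hV x) _))
      Finset.univ_nonempty
  set F : (𝒳 → ℝ) → ℝ := fun V => ∑ g : G, inn V g ^ q with hFdef
  have hterm : ∀ (V : 𝒳 → ℝ), (∀ x, 0 < V x) → ∀ (g : G) (x : 𝒳),
      (PXY (x, g) * PX x ^ (r + l) * V x ^ (-r)) ^ (1 / q) = a g x * V x ^ (-(r / q)) := by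
    intro V hV g x
    rw [Real.mul_rpow (mul_nonneg (hP0 g x).le (Real.rpow_nonneg (by rw [hPXu]; positivity) _))
      (Real.rpow_nonneg (hV x).le _), ← Real.rpow_mul (hV x).le, neg_mul, mul_one_div]
  have hfF : ∀ V : 𝒳 → ℝ, (∀ x, 0 < V x) → f V = -Real.log (F V) := by
    intro V hV
    rw [hf]
    simp only [hFdef, hinndef]
    congr 2
    refine Finset.sum_congr rfl fun g _ => ?_
    congr 1
    exact Finset.sum_congr rfl fun x _ => hterm V hV g x
  -- weights
  have hwsum : ∑ _g : G, (1 / nG) = (1:ℝ) := by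
    rw [Finset.sum_const, Finset.card_univ, nsmul_eq_mul]
    field_simp
    exact hnGdef.symm
  -- Step 1: pointwise Jensen for the uniform average
  have step1 : ∀ x : 𝒳, ((1:ℝ)/M) ^ (-(r/q)) ≤
      ∑ h : G, (1/nG) * W ((h : Equiv.Perm 𝒳) x) ^ (-(r/q)) := by
    intro x
    have havg : ∑ h : G, (1/nG) * W ((h : Equiv.Perm 𝒳) x) = 1/M := by
      rw [← Finset.mul_sum, key W x, hW.2, mul_one]
      field_simp
    rw [← havg]
    exact jensen_neg_rpow Finset.univ _ _ (fun _ _ => by positivity) hwsum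
      (fun h _ => hWpos _) (div_nonneg hr hq0.le)
  set B : G → G → ℝ := fun g h => ∑ x, a g x * W ((h : Equiv.Perm 𝒳) x) ^ (-(r/q)) with hBdef
  have hBpos : ∀ g h, 0 < B g h := by
    intro g h
    exact Finset.sum_pos (fun x _ => mul_pos (hapos g x) (Real.rpow_pos_of_pos (hWpos _) _))
      Finset.univ_nonempty
  -- Step 2
  have step2 : ∀ g : G, inn (fun _ => 1/M) g ≤ ∑ h : G, (1/nG) * B g h := by
    intro g
    calc inn (fun _ => 1/M) g = ∑ x, a g x * ((1:ℝ)/M) ^ (-(r/q)) := by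
          simp only [hinndef]
      _ ≤ ∑ x, a g x * (∑ h : G, (1/nG) * W ((h : Equiv.Perm 𝒳) x) ^ (-(r/q))) :=
          Finset.sum_le_sum fun x _ => mul_le_mul_of_nonneg_left (step1 x) (hapos g x).le
      _ = ∑ h : G, (1/nG) * B g h := by
          simp only [Finset.mul_sum, hBdef]
          rw [Finset.sum_comm]
          refine Finset.sum_congr rfl fun h _ => ?_
          exact Finset.sum_congr rfl fun x _ => by ring
  -- Step 3: reindexing
  have step3 : ∀ h : G, ∑ g : G, B g h ^ q = F W := by
    intro h
    have hBW : ∀ g : G, B g h = inn W (g * h⁻¹) := by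
      intro g
      have e1 : B g h = ∑ x, a g ((h : Equiv.Perm 𝒳)⁻¹ x) * W x ^ (-(r/q)) := by
        rw [hBdef]
        rw [← Equiv.sum_comp (h : Equiv.Perm 𝒳)
          (fun x => a g ((h : Equiv.Perm 𝒳)⁻¹ x) * W x ^ (-(r/q)))]
        simp
      have e2 : ∀ x, a g ((h : Equiv.Perm 𝒳)⁻¹ x) = a (g * h⁻¹) x := by
        intro x
        simp only [hadef, hPXY, hPXu, Equiv.Perm.mul_apply]
        simp
      rw [e1, hinndef]
      exact Finset.sum_congr rfl fun x _ => by rw [e2 x]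
    calc ∑ g : G, B g h ^ q = ∑ g : G, inn W (g * h⁻¹) ^ q :=
          Finset.sum_congr rfl fun g _ => by rw [hBW g]
      _ = ∑ g : G, inn W g ^ q :=
          Fintype.sum_equiv (Equiv.mulRight h⁻¹) _ _ (fun g => rfl)
      _ = F W := by rw [hFdef]
  -- Step 4: combine
  have hFle : F (fun _ => 1/M) ≤ F W := by
    calc F (fun _ => 1/M) = ∑ g : G, inn (fun _ => 1/M) g ^ q := by rw [hFdef]
      _ ≤ ∑ g : G, (∑ h : G, (1/nG) * B g h) ^ q :=
          Finset.sum_le_sum fun g _ => Real.rpow_le_rpow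
            (hinnpos _ (fun _ => by positivity) g).le (step2 g) hq0.le
      _ ≤ ∑ g : G, ∑ h : G, (1/nG) * B g h ^ q :=
          Finset.sum_le_sum fun g _ =>
            Real.rpow_arith_mean_le_arith_mean_rpow Finset.univ _ _
              (fun _ _ => by positivity) hwsum (fun h _ => (hBpos g h).le) hq1
      _ = ∑ h : G, (1/nG) * ∑ g : G, B g h ^ q := by
          rw [Finset.sum_comm]
          exact Finset.sum_congr rfl fun h _ => by rw [Finset.mul_sum]
      _ = ∑ h : G, (1/nG) * F W := Finset.sum_congr rfl fun h _ => by rw [step3 h]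
      _ = F W := by
          rw [← Finset.sum_mul, hwsum, one_mul]
  have hFUpos : 0 < F (fun _ => 1/M) := by
    rw [hFdef]
    exact Finset.sum_pos (fun g _ => Real.rpow_pos_of_pos
      (hinnpos _ (fun _ => by positivity) g) q) Finset.univ_nonempty
  rw [hfF W hWpos, hfF _ (fun _ => by positivity)]
  have hlog := Real.log_le_log hFUpos hFle
  linarith
end

section
/- Let P_XY be a probability distribution on 𝒳×𝒴 with P_XY(x,y) > 0 for all (x,y), and let R be any real number. Then the minimum over all joint probability distributions Q_XY on 𝒳×𝒴 of { D(Q_XY‖P_XY) + [ R − H_Q(X|Y) ]_+ } equals the maximum over ρ ∈ [0,1] of { −ln( Σ_y ( Σ_x P_XY(x,y)^{1/(1+ρ)} )^{1+ρ} ) + ρR }. -/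
open Finset

/-- The log-sum inequality. -/
lemma log_sum_ineq {ι : Type*} (s : Finset ι) (a b : ι → ℝ)
    (ha : ∀ i ∈ s, 0 ≤ a i) (hb : ∀ i ∈ s, 0 < b i) :
    (∑ i ∈ s, a i) * Real.log ((∑ i ∈ s, a i) / (∑ i ∈ s, b i)) ≤
      ∑ i ∈ s, a i * Real.log (a i / b i) := by
  classical
  rcases eq_or_lt_of_le (Finset.sum_nonneg ha) with h0 | hTpos
  · have hall : ∀ i ∈ s, a i = 0 :=
      fun i hi => (Finset.sum_eq_zero_iff_of_nonneg ha).1 h0.symm i hi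
    rw [← h0]
    simp only [zero_mul]
    exact Finset.sum_nonneg (fun i hi => by rw [hall i hi]; simp)
  · set t := s.filter (fun i => a i ≠ 0) with ht
    have hts : t ⊆ s := Finset.filter_subset _ _
    have hapos : ∀ i ∈ t, 0 < a i := by
      intro i hi
      rw [ht, Finset.mem_filter] at hi
      exact lt_of_le_of_ne (ha i hi.1) (Ne.symm hi.2)
    have hTt : ∑ i ∈ t, a i = ∑ i ∈ s, a i :=
      Finset.sum_filter_of_ne (fun i _ h => h)
    have hRHSt : ∑ i ∈ t, a i * Real.log (a i / b i)
        = ∑ i ∈ s, a i * Real.log (a i / b i) :=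
      Finset.sum_filter_of_ne (fun i _ h => by
        intro ha0; rw [ha0] at h; simp at h)
    have htne : t.Nonempty := by
      by_contra hemp
      rw [Finset.not_nonempty_iff_eq_empty] at hemp
      rw [← hTt, hemp] at hTpos; simp at hTpos
    have hsne : s.Nonempty := htne.mono hts
    have hBpos : 0 < ∑ i ∈ s, b i := Finset.sum_pos hb hsne
    have hB't : 0 < ∑ i ∈ t, b i :=
      Finset.sum_pos (fun i hi => hb i (hts hi)) htne
    have hB'B : ∑ i ∈ t, b i ≤ ∑ i ∈ s, b i :=
      Finset.sum_le_sum_of_subset_of_nonneg hts (fun i hi _ => (hb i hi).le)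
    have hjensen := (strictConcaveOn_log_Ioi.concaveOn).le_map_sum
      (t := t) (w := fun i => a i / (∑ i ∈ s, a i)) (p := fun i => b i / a i)
      (fun i hi => div_nonneg (ha i (hts hi)) hTpos.le)
      (by rw [← Finset.sum_div, hTt]; field_simp)
      (fun i hi => Set.mem_Ioi.2 (div_pos (hb i (hts hi)) (hapos i hi)))
    simp only [smul_eq_mul] at hjensen
    have hsum_p : ∑ i ∈ t, (a i / (∑ i ∈ s, a i)) * (b i / a i)
        = (∑ i ∈ t, b i) / (∑ i ∈ s, a i) := by
      rw [Finset.sum_congr rfl (fun i hi =>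
        show (a i / (∑ i ∈ s, a i)) * (b i / a i) = b i / (∑ i ∈ s, a i) by
          field_simp [(hapos i hi).ne']), ← Finset.sum_div]
    rw [hsum_p] at hjensen
    have hlogmono : Real.log ((∑ i ∈ t, b i) / (∑ i ∈ s, a i))
        ≤ Real.log ((∑ i ∈ s, b i) / (∑ i ∈ s, a i)) :=
      Real.log_le_log (div_pos hB't hTpos)
        (by gcongr)
    -- conclude
    have hmain : ∑ i ∈ t, (a i / (∑ i ∈ s, a i)) * Real.log (b i / a i)
        ≤ Real.log ((∑ i ∈ s, b i) / (∑ i ∈ s, a i)) := hjensen.trans hlogmono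
    have hmul := mul_le_mul_of_nonneg_left hmain hTpos.le
    rw [Finset.mul_sum] at hmul
    have hterm : ∀ i ∈ t, (∑ j ∈ s, a j) * ((a i / (∑ j ∈ s, a j)) * Real.log (b i / a i))
        = - (a i * Real.log (a i / b i)) := by
      intro i hi
      rw [Real.log_div (hb i (hts hi)).ne' (hapos i hi).ne',
        Real.log_div (hapos i hi).ne' (hb i (hts hi)).ne']
      field_simp
      ring
    rw [Finset.sum_congr rfl hterm, Finset.sum_neg_distrib] at hmul
    have hlogTB : Real.log ((∑ i ∈ s, b i) / (∑ i ∈ s, a i))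
        = - Real.log ((∑ i ∈ s, a i) / (∑ i ∈ s, b i)) := by
      rw [Real.log_div hBpos.ne' hTpos.ne', Real.log_div hTpos.ne' hBpos.ne']
      ring
    rw [hlogTB] at hmul
    rw [← hRHSt]
    linarith [hmul]

section Tilt
variable {𝒳 𝒴 : Type*} [Fintype 𝒳] [Nonempty 𝒳] [Fintype 𝒴] [Nonempty 𝒴]

noncomputable def Afun (P : 𝒳 × 𝒴 → ℝ) (r : ℝ) (y : 𝒴) : ℝ :=
  ∑ x, P (x, y) ^ (1 / (1 + r))

noncomputable def Zfun (P : 𝒳 × 𝒴 → ℝ) (r : ℝ) : ℝ :=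
  ∑ y, Afun P r y ^ (1 + r)

noncomputable def Qtilt (P : 𝒳 × 𝒴 → ℝ) (r : ℝ) : 𝒳 × 𝒴 → ℝ :=
  fun p => P p ^ (1 / (1 + r)) * Afun P r p.2 ^ r / Zfun P r

variable {P : 𝒳 × 𝒴 → ℝ} {r : ℝ}

lemma Afun_pos (hP : ∀ p, 0 < P p) (y : 𝒴) : 0 < Afun P r y :=
  Finset.sum_pos (fun x _ => Real.rpow_pos_of_pos (hP _) _) univ_nonempty

lemma Zfun_pos (hP : ∀ p, 0 < P p) : 0 < Zfun P r :=
  Finset.sum_pos (fun y _ => Real.rpow_pos_of_pos (Afun_pos hP y) _) univ_nonempty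

lemma Qtilt_pos (hP : ∀ p, 0 < P p) (p : 𝒳 × 𝒴) : 0 < Qtilt P r p :=
  div_pos (mul_pos (Real.rpow_pos_of_pos (hP p) _)
    (Real.rpow_pos_of_pos (Afun_pos hP p.2) _)) (Zfun_pos hP)

lemma margY_Qtilt (hP : ∀ p, 0 < P p) (y : 𝒴) :
    margY (Qtilt P r) y = Afun P r y ^ (1 + r) / Zfun P r := by
  unfold margY Qtilt
  rw [← Finset.sum_div]
  congr 1
  rw [Finset.sum_congr rfl (fun x _ =>
    show P (x, y) ^ (1 / (1 + r)) * Afun P r (x, y).2 ^ r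
      = P (x, y) ^ (1 / (1 + r)) * Afun P r y ^ r from rfl)]
  rw [← Finset.sum_mul]
  rw [show (∑ x, P (x, y) ^ (1 / (1 + r))) = Afun P r y from rfl]
  rw [Real.rpow_add (Afun_pos hP y) 1 r, Real.rpow_one]

lemma Qtilt_isProb (hP : ∀ p, 0 < P p) : IsProb (Qtilt P r) := by
  refine ⟨fun p => (Qtilt_pos hP p).le, ?_⟩
  rw [Fintype.sum_prod_type, Finset.sum_comm]
  have : ∀ y, (∑ x, Qtilt P r (x, y)) = Afun P r y ^ (1 + r) / Zfun P r :=
    fun y => margY_Qtilt hP y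
  rw [Finset.sum_congr rfl (fun y _ => this y), ← Finset.sum_div]
  exact div_self (Zfun_pos hP).ne'

lemma log_Qtilt (hP : ∀ p, 0 < P p) (p : 𝒳 × 𝒴) :
    Real.log (Qtilt P r p) = (1 / (1 + r)) * Real.log (P p)
      + r * Real.log (Afun P r p.2) - Real.log (Zfun P r) := by
  unfold Qtilt
  rw [Real.log_div (mul_pos (Real.rpow_pos_of_pos (hP p) _)
        (Real.rpow_pos_of_pos (Afun_pos hP p.2) _)).ne' (Zfun_pos hP).ne',
    Real.log_mul (Real.rpow_pos_of_pos (hP p) _).ne'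
        (Real.rpow_pos_of_pos (Afun_pos hP p.2) _).ne',
    Real.log_rpow (hP p), Real.log_rpow (Afun_pos hP p.2)]


lemma le_margY {Q : 𝒳 × 𝒴 → ℝ} (hQ : IsProb Q) (p : 𝒳 × 𝒴) : Q p ≤ margY Q p.2 := by
  have := Finset.single_le_sum (f := fun x => Q (x, p.2))
    (fun x _ => hQ.1 _) (Finset.mem_univ p.1)
  exact this

lemma sum_margY {Q : 𝒳 × 𝒴 → ℝ} (hQ : IsProb Q) : ∑ y, margY Q y = 1 := by
  rw [← hQ.2, Fintype.sum_prod_type, Finset.sum_comm]; rfl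

lemma log_margY_Qtilt (hP : ∀ p, 0 < P p) (y : 𝒴) :
    Real.log (margY (Qtilt P r) y)
      = (1 + r) * Real.log (Afun P r y) - Real.log (Zfun P r) := by
  rw [margY_Qtilt hP, Real.log_div (Real.rpow_pos_of_pos (Afun_pos hP y) _).ne'
    (Zfun_pos hP).ne', Real.log_rpow (Afun_pos hP y)]

lemma key_identity (hP : ∀ p, 0 < P p) {Q : 𝒳 × 𝒴 → ℝ} (hQ : IsProb Q)
    (h1r : 0 < 1 + r) :
    KL Q P - r * condEnt Q + Real.log (Zfun P r)
      = (1 + r) * (∑ p : 𝒳 × 𝒴, Q p * Real.log (Q p / Qtilt P r p))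
        - r * (∑ y, margY Q y *
            Real.log (margY Q y / (Afun P r y ^ (1 + r) / Zfun P r))) := by
  have hCE : condEnt Q = -∑ p : 𝒳 × 𝒴, Q p * Real.log (Q p / margY Q p.2) := by
    unfold condEnt; rw [Fintype.sum_prod_type]
  have hS2 : ∑ y, margY Q y * Real.log (margY Q y / (Afun P r y ^ (1 + r) / Zfun P r))
      = ∑ p : 𝒳 × 𝒴, Q p * Real.log (margY Q p.2 / (Afun P r p.2 ^ (1 + r) / Zfun P r)) := by
    rw [Fintype.sum_prod_type, Finset.sum_comm]
    exact Finset.sum_congr rfl (fun y _ => by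
      rw [margY, Finset.sum_mul]
      exact Finset.sum_congr rfl (fun x _ => rfl))
  have hlogZ : Real.log (Zfun P r) = ∑ p : 𝒳 × 𝒴, Q p * Real.log (Zfun P r) := by
    rw [← Finset.sum_mul, hQ.2, one_mul]
  have hpt : ∀ p ∈ (univ : Finset (𝒳 × 𝒴)),
      Q p * Real.log (Q p / P p) + r * (Q p * Real.log (Q p / margY Q p.2))
        + Q p * Real.log (Zfun P r)
      = (1 + r) * (Q p * Real.log (Q p / Qtilt P r p))
        - r * (Q p * Real.log (margY Q p.2 / (Afun P r p.2 ^ (1 + r) / Zfun P r))) := by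
    intro p _
    rcases eq_or_lt_of_le (hQ.1 p) with h0 | hq
    · rw [← h0]; ring
    · have hMp : 0 < margY Q p.2 := lt_of_lt_of_le hq (le_margY hQ p)
      have hAp := Afun_pos (r := r) hP p.2
      have hZp := Zfun_pos (r := r) hP
      have hdiv : (0:ℝ) < Afun P r p.2 ^ (1 + r) / Zfun P r :=
        div_pos (Real.rpow_pos_of_pos hAp _) hZp
      rw [Real.log_div hq.ne' (hP p).ne', Real.log_div hq.ne' hMp.ne',
        Real.log_div hq.ne' (Qtilt_pos hP p).ne', Real.log_div hMp.ne' hdiv.ne',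
        log_Qtilt hP, Real.log_div (Real.rpow_pos_of_pos hAp _).ne' hZp.ne',
        Real.log_rpow hAp]
      have h1 : 1 / (1 + r) * (1 + r) = 1 := by field_simp
      linear_combination (Q p * Real.log (P p)) * h1
  have hsum := Finset.sum_congr rfl hpt
  simp only [Finset.sum_add_distrib, Finset.sum_sub_distrib, ← Finset.mul_sum] at hsum
  rw [hCE, hS2, hlogZ]
  unfold KL
  linarith [hsum]

lemma key_ineq (hP : ∀ p, 0 < P p) {Q : 𝒳 × 𝒴 → ℝ} (hQ : IsProb Q) (hr0 : 0 ≤ r) :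
    - Real.log (Zfun P r) ≤ KL Q P - r * condEnt Q := by
  have h1r : 0 < 1 + r := by linarith
  have hid := key_identity hP hQ h1r (r := r)
  set S1 := ∑ p : 𝒳 × 𝒴, Q p * Real.log (Q p / Qtilt P r p) with hS1def
  set S2 := ∑ y, margY Q y * Real.log (margY Q y / (Afun P r y ^ (1 + r) / Zfun P r))
    with hS2def
  have hS2nonneg : 0 ≤ S2 := by
    have hls := log_sum_ineq univ (margY Q)
      (fun y => Afun P r y ^ (1 + r) / Zfun P r)
      (fun y _ => Finset.sum_nonneg (fun x _ => hQ.1 _))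
      (fun y _ => div_pos (Real.rpow_pos_of_pos (Afun_pos hP y) _) (Zfun_pos hP))
    rw [sum_margY hQ] at hls
    have hb1 : ∑ y, Afun P r y ^ (1 + r) / Zfun P r = 1 := by
      rw [← Finset.sum_div]; exact div_self (Zfun_pos hP).ne'
    rw [hb1] at hls
    simpa using hls
  have hS1S2 : S2 ≤ S1 := by
    have hS1y : S1 = ∑ y, ∑ x, Q (x, y) * Real.log (Q (x, y) / Qtilt P r (x, y)) := by
      rw [hS1def, Fintype.sum_prod_type, Finset.sum_comm]
    rw [hS1y, hS2def]
    apply Finset.sum_le_sum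
    intro y _
    have hls := log_sum_ineq univ (fun x => Q (x, y)) (fun x => Qtilt P r (x, y))
      (fun x _ => hQ.1 _) (fun x _ => Qtilt_pos hP _)
    have hbm : ∑ x, Qtilt P r (x, y) = Afun P r y ^ (1 + r) / Zfun P r :=
      margY_Qtilt hP y
    rw [hbm] at hls
    exact hls
  nlinarith [mul_le_mul_of_nonneg_left hS1S2 h1r.le]

lemma KL_Qtilt (hP : ∀ p, 0 < P p) (h1r : 0 < 1 + r) :
    KL (Qtilt P r) P - r * condEnt (Qtilt P r) = - Real.log (Zfun P r) := by
  have hCE : condEnt (Qtilt P r)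
      = -∑ p : 𝒳 × 𝒴, Qtilt P r p * Real.log (Qtilt P r p / margY (Qtilt P r) p.2) := by
    unfold condEnt; rw [Fintype.sum_prod_type]
  have hpt : ∀ p ∈ (univ : Finset (𝒳 × 𝒴)),
      Qtilt P r p * Real.log (Qtilt P r p / P p)
        + r * (Qtilt P r p * Real.log (Qtilt P r p / margY (Qtilt P r) p.2))
      = Qtilt P r p * (- Real.log (Zfun P r)) := by
    intro p _
    have hQp := Qtilt_pos (r := r) hP p
    have hMp : 0 < margY (Qtilt P r) p.2 := by
      rw [margY_Qtilt hP]
      exact div_pos (Real.rpow_pos_of_pos (Afun_pos hP p.2) _) (Zfun_pos hP)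
    rw [Real.log_div hQp.ne' (hP p).ne', Real.log_div hQp.ne' hMp.ne',
      log_Qtilt hP, log_margY_Qtilt hP]
    have h1 : 1 / (1 + r) * (1 + r) = 1 := by field_simp
    linear_combination (Qtilt P r p * Real.log (P p)) * h1
  have hsum := Finset.sum_congr rfl hpt
  simp only [Finset.sum_add_distrib, ← Finset.mul_sum] at hsum
  rw [← Finset.sum_mul, (Qtilt_isProb hP).2, one_mul] at hsum
  rw [KL, hCE]
  linarith [hsum]

lemma condEnt_Qtilt (hP : ∀ p, 0 < P p) :
    condEnt (Qtilt P r) = ∑ p : 𝒳 × 𝒴, Qtilt P r p *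
      (Real.log (Afun P r p.2) - (1 / (1 + r)) * Real.log (P p)) := by
  have hCE : condEnt (Qtilt P r)
      = -∑ p : 𝒳 × 𝒴, Qtilt P r p * Real.log (Qtilt P r p / margY (Qtilt P r) p.2) := by
    unfold condEnt; rw [Fintype.sum_prod_type]
  rw [hCE, ← Finset.sum_neg_distrib]
  apply Finset.sum_congr rfl
  intro p _
  have hQp := Qtilt_pos (r := r) hP p
  have hMp : 0 < margY (Qtilt P r) p.2 := by
    rw [margY_Qtilt hP]
    exact div_pos (Real.rpow_pos_of_pos (Afun_pos hP p.2) _) (Zfun_pos hP)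
  rw [Real.log_div hQp.ne' hMp.ne', log_Qtilt hP, log_margY_Qtilt hP]
  ring

lemma condEnt_Qtilt_contOn (hP : ∀ p, 0 < P p) :
    ContinuousOn (fun r : ℝ => condEnt (Qtilt P r)) (Set.Icc (0:ℝ) 1) := by
  have hs : ∀ r ∈ Set.Icc (0:ℝ) 1, (1:ℝ) + r ≠ 0 := fun r hr => by
    have := hr.1; intro h; linarith
  have hα : ContinuousOn (fun r : ℝ => 1 / (1 + r)) (Set.Icc (0:ℝ) 1) :=
    ContinuousOn.div continuousOn_const (by fun_prop) hs
  have hcP : ∀ p : 𝒳 × 𝒴,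
      ContinuousOn (fun r : ℝ => P p ^ (1 / (1 + r))) (Set.Icc (0:ℝ) 1) :=
    fun p => ContinuousOn.rpow continuousOn_const hα (fun r _ => Or.inl (hP p).ne')
  have hcA : ∀ y : 𝒴, ContinuousOn (fun r : ℝ => Afun P r y) (Set.Icc (0:ℝ) 1) :=
    fun y => continuousOn_finset_sum _ (fun x _ => hcP (x, y))
  have hcZ : ContinuousOn (fun r : ℝ => Zfun P r) (Set.Icc (0:ℝ) 1) :=
    continuousOn_finset_sum _ (fun y _ => (hcA y).rpow (by fun_prop)
      (fun r _ => Or.inl (Afun_pos hP y).ne'))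
  have hcQ : ∀ p : 𝒳 × 𝒴, ContinuousOn (fun r : ℝ => Qtilt P r p) (Set.Icc (0:ℝ) 1) :=
    fun p => ((hcP p).mul ((hcA p.2).rpow continuousOn_id
      (fun r _ => Or.inl (Afun_pos hP p.2).ne'))).div hcZ
      (fun r _ => (Zfun_pos hP).ne')
  have hgoal : ContinuousOn (fun r : ℝ => ∑ p : 𝒳 × 𝒴, Qtilt P r p *
      (Real.log (Afun P r p.2) - (1 / (1 + r)) * Real.log (P p))) (Set.Icc (0:ℝ) 1) :=
    continuousOn_finset_sum _ (fun p _ => (hcQ p).mul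
      (((hcA p.2).log (fun r _ => (Afun_pos hP p.2).ne')).sub
        (hα.mul continuousOn_const)))
  exact hgoal.congr (fun r _ => condEnt_Qtilt hP)

end Tilt

/-- Csiszár-style = Gallager-style form of the fixed-rate
Slepian–Wolf random-coding error exponent. -/
theorem stmt_9 {𝒳 𝒴 : Type*} [Fintype 𝒳] [Nonempty 𝒳] [Fintype 𝒴] [Nonempty 𝒴]
    (P : 𝒳 × 𝒴 → ℝ) (hP : IsProb P) (hPpos : ∀ p, 0 < P p) (R : ℝ) :
    sInf {v | ∃ Q : 𝒳 × 𝒴 → ℝ, IsProb Q ∧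
        v = KL Q P + max (R - condEnt Q) 0}
      = sSup {v | ∃ r : ℝ, 0 ≤ r ∧ r ≤ 1 ∧
          v = -Real.log (∑ y, (∑ x, P (x, y) ^ (1 / (1 + r))) ^ (1 + r)) + r * R} := by
  classical
  set SL := {v | ∃ Q : 𝒳 × 𝒴 → ℝ, IsProb Q ∧ v = KL Q P + max (R - condEnt Q) 0}
    with hSLdef
  set SR := {v | ∃ r : ℝ, 0 ≤ r ∧ r ≤ 1 ∧
      v = -Real.log (∑ y, (∑ x, P (x, y) ^ (1 / (1 + r))) ^ (1 + r)) + r * R} with hSRdef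
  have hZ : ∀ r : ℝ, (∑ y, (∑ x, P (x, y) ^ (1 / (1 + r))) ^ (1 + r)) = Zfun P r :=
    fun r => rfl
  have hRmem : ∀ r : ℝ, 0 ≤ r → r ≤ 1 → (-Real.log (Zfun P r) + r * R) ∈ SR :=
    fun r h0 h1 => ⟨r, h0, h1, by rw [hZ]⟩
  have hLmem : ∀ r : ℝ,
      (KL (Qtilt P r) P + max (R - condEnt (Qtilt P r)) 0) ∈ SL :=
    fun r => ⟨Qtilt P r, Qtilt_isProb hPpos, rfl⟩
  have hLB : ∀ v ∈ SL, ∀ w ∈ SR, w ≤ v := by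
    rintro v ⟨Q, hQ, rfl⟩ w ⟨r, hr0, hr1, rfl⟩
    rw [hZ]
    have hmax : r * (R - condEnt Q) ≤ max (R - condEnt Q) 0 := by
      rcases le_or_gt 0 (R - condEnt Q) with h | h
      · calc r * (R - condEnt Q) ≤ 1 * (R - condEnt Q) := by nlinarith
          _ ≤ max (R - condEnt Q) 0 := by rw [one_mul]; exact le_max_left _ _
      · exact (mul_nonpos_of_nonneg_of_nonpos hr0 h.le).trans (le_max_right _ _)
    have hk := key_ineq hPpos hQ hr0
    nlinarith [hk, hmax]
  have hRne : SR.Nonempty := ⟨_, hRmem 0 le_rfl zero_le_one⟩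
  have hLne : SL.Nonempty := ⟨_, hLmem 0⟩
  have hRbdd : BddAbove SR :=
    ⟨KL (Qtilt P 0) P + max (R - condEnt (Qtilt P 0)) 0,
      fun w hw => hLB _ (hLmem 0) w hw⟩
  have hLbdd : BddBelow SL :=
    ⟨-Real.log (Zfun P 0) + 0 * R, fun v hv => hLB v hv _ (hRmem 0 le_rfl zero_le_one)⟩
  obtain ⟨ρ, hρ0, hρ1, hsaddle⟩ : ∃ ρ : ℝ, 0 ≤ ρ ∧ ρ ≤ 1 ∧
      KL (Qtilt P ρ) P + max (R - condEnt (Qtilt P ρ)) 0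
        ≤ -Real.log (Zfun P ρ) + ρ * R := by
    by_cases hc0 : R ≤ condEnt (Qtilt P 0)
    · refine ⟨0, le_rfl, zero_le_one, ?_⟩
      have hkl := KL_Qtilt (P := P) (r := 0) hPpos (by norm_num)
      have hmax0 : max (R - condEnt (Qtilt P 0)) 0 = 0 := max_eq_right (by linarith)
      rw [hmax0]
      have h0c : (0:ℝ) * condEnt (Qtilt P 0) = 0 := zero_mul _
      have h0R : (0:ℝ) * R = 0 := zero_mul _
      linarith
    · by_cases hc1 : condEnt (Qtilt P 1) ≤ R
      · refine ⟨1, zero_le_one, le_rfl, ?_⟩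
        have hkl := KL_Qtilt (P := P) (r := 1) hPpos (by norm_num)
        have hmax1 : max (R - condEnt (Qtilt P 1)) 0 = R - condEnt (Qtilt P 1) :=
          max_eq_left (by linarith)
        rw [hmax1]
        have h1c : (1:ℝ) * condEnt (Qtilt P 1) = condEnt (Qtilt P 1) := one_mul _
        have h1R : (1:ℝ) * R = R := one_mul _
        linarith
      · push_neg at hc0 hc1
        have hcont : ContinuousOn (fun r : ℝ => condEnt (Qtilt P r))
            (Set.uIcc (0:ℝ) 1) := by
          rw [Set.uIcc_of_le zero_le_one]
          exact condEnt_Qtilt_contOn hPpos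
        have hmemIcc : R ∈ Set.uIcc (condEnt (Qtilt P 0)) (condEnt (Qtilt P 1)) :=
          Set.mem_uIcc.2 (Or.inl ⟨hc0.le, hc1.le⟩)
        obtain ⟨ρ, hρmem, hρeq⟩ := intermediate_value_uIcc hcont hmemIcc
        rw [Set.uIcc_of_le zero_le_one] at hρmem
        refine ⟨ρ, hρmem.1, hρmem.2, ?_⟩
        have hkl := KL_Qtilt (P := P) (r := ρ) hPpos (by linarith [hρmem.1])
        simp only at hρeq
        have hmaxρ : max (R - condEnt (Qtilt P ρ)) 0 = 0 := by
          rw [hρeq]; simp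
        rw [hmaxρ, hρeq] at *
        nlinarith [hkl]
  refine le_antisymm ?_ ?_
  · exact (csInf_le hLbdd (hLmem ρ)).trans
      (hsaddle.trans (le_csSup hRbdd (hRmem ρ hρ0 hρ1)))
  · exact le_csInf hLne (fun v hv => csSup_le hRne (fun w hw => hLB v hv w hw))
end
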